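/- arXiv:1110.0168 — 2 statements merged into one kernel-verified Lean document; each statement's English description precedes it below -/
import Mathlib

section
/- For every V ∈ 𝒱 with V(𝐚) = 0, every y ∈ 𝒴₀, and every u ∈ 𝒰₀, the following two edge representations hold: ⟨δE_c(y), u⟩ = Σ_{x∈ℒ} Σ_{j=1}^3 ( V_{T_{x,j},j} + V_{T_{x,j−1},j} ) · D_j u(x), and ⟨δE_a(y), u⟩ = Σ_{x∈ℒ} Σ_{j=1}^3 ( V_{x,j} − V_{x+a_j, j+3} ) · D_j u(x). -/
open Real
open scoped BigOperators Classical ENNReal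

noncomputable section

namespace AC

/-- The plane `ℝ²` with the Euclidean norm. -/
abbrev E2 := EuclideanSpace ℝ (Fin 2)

/-- `2 × 2` real matrices. -/
abbrev Mat2 := Matrix (Fin 2) (Fin 2) ℝ

def toE2 (v : Fin 2 → ℝ) : E2 := WithLp.toLp 2 v

/-- The lattice directions `a_j = Q6^(j-1) a_1`, `Q6` the rotation by `π/3`. -/
def avec (j : ℤ) : E2 :=
  toE2 ![Real.cos (((j : ℝ) - 1) * (Real.pi / 3)), Real.sin (((j : ℝ) - 1) * (Real.pi / 3))]

/-- The volume `Ω₀ = √3/2` of a primitive cell. -/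
def Om0 : ℝ := Real.sqrt 3 / 2

/-- `𝐚 = (a_1, …, a_6)`. -/
def aFam : Fin 6 → E2 := fun j => avec ((j : ℕ) + 1)

/-- Matrix-vector multiplication on `E2`. -/
def mvec (F : Mat2) (v : E2) : E2 := toE2 fun i => ∑ k, F i k * v k

/-- `F𝐚 = (F a_1, …, F a_6)`. -/
def Famat (F : Mat2) : Fin 6 → E2 := fun j => mvec F (aFam j)

/-- Lattice coordinates (w.r.t. the basis `a_1, a_2`) of `a_j` (indices mod 6). -/
def ed (j : ℤ) : ℤ × ℤ :=
  match (j % 6).toNat with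
  | 1 => (1, 0)
  | 2 => (0, 1)
  | 3 => (-1, 1)
  | 4 => (-1, 0)
  | 5 => (0, -1)
  | _ => (1, -1)

/-- The lattice point `n₁ a₁ + n₂ a₂`; `ℒ = emb '' (ℤ × ℤ)`. -/
def emb (n : ℤ × ℤ) : E2 := (n.1 : ℝ) • avec 1 + (n.2 : ℝ) • avec 2

/-- Forward finite difference `D_j v(x) = v(x + a_j) - v(x)` in lattice coordinates. -/
def Dd (j : ℤ) (v : ℤ × ℤ → E2) (n : ℤ × ℤ) : E2 := v (n + ed j) - v n

/-- `Dv(x) = (D_1 v(x), …, D_6 v(x))`. -/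
def Dfam (y : ℤ × ℤ → E2) (n : ℤ × ℤ) : Fin 6 → E2 := fun j => Dd ((j : ℕ) + 1) y n

/-- Euclidean dot product. -/
def dotE (v w : E2) : ℝ := ∑ i, v i * w i

/-- Frobenius inner product `A : B`. -/
def frobI (A B : Mat2) : ℝ := ∑ i, ∑ k, A i k * B i k

/-- Frobenius norm. -/
def frobN (A : Mat2) : ℝ := Real.sqrt (∑ i, ∑ k, (A i k) ^ 2)

/-- Outer product `v ⊗ w`. -/
def outer (v w : E2) : Mat2 := fun i k => v i * w k

/-- The element of `(ℝ²)⁶` with `k`-th standard basis vector in slot `j` and `0` elsewhere. -/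
def unitv (j : Fin 6) (k : Fin 2) : Fin 6 → E2 := fun i => if i = j then toE2 (Pi.single k 1) else 0

/-- Partial gradient `∂_j V(g) ∈ ℝ²` of `V` with respect to its `j`-th argument. -/
def pd (V : (Fin 6 → E2) → ℝ) (j : Fin 6) (g : Fin 6 → E2) : E2 :=
  toE2 fun k => deriv (fun t : ℝ => V (g + t • unitv j k)) 0

/-- Second partial derivative `∂_{ij} V(g) ∈ ℝ^{2×2}`. -/
def pd2 (V : (Fin 6 → E2) → ℝ) (i j : Fin 6) (g : Fin 6 → E2) : Mat2 :=
  fun k l => deriv (fun t : ℝ => pd V j (g + t • unitv i k) l) 0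

/-- Third partial derivative `∂_{ijk} V(g)`. -/
def pd3 (V : (Fin 6 → E2) → ℝ) (i j k : Fin 6) (g : Fin 6 → E2) : Fin 2 → Fin 2 → Fin 2 → ℝ :=
  fun p q r => deriv (fun t : ℝ => pd2 V j k (g + t • unitv i p) q r) 0

/-- Operator norm of a matrix viewed as a bilinear form on `ℝ²`. -/
def matOpNorm (A : Mat2) : ℝ :=
  sSup {r : ℝ | ∃ h1 h2 : E2, ‖h1‖ = 1 ∧ ‖h2‖ = 1 ∧ r = ∑ k, ∑ l, A k l * h1 k * h2 l}

/-- Norm of a trilinear form on `ℝ²`. -/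
def t3norm (B : Fin 2 → Fin 2 → Fin 2 → ℝ) : ℝ :=
  sSup {r : ℝ | ∃ h1 h2 h3 : E2, ‖h1‖ = 1 ∧ ‖h2‖ = 1 ∧ ‖h3‖ = 1 ∧
    r = ∑ p, ∑ q, ∑ s, B p q s * h1 p * h2 q * h3 s}

/-- `M₂ = Σ_{i,j} sup_g ‖∂_{ij}V(g)‖`. -/
def M2 (V : (Fin 6 → E2) → ℝ) : ℝ :=
  ∑ i : Fin 6, ∑ j : Fin 6, ⨆ g : Fin 6 → E2, matOpNorm (pd2 V i j g)

/-- `M₃ = Σ_{i,j,k} sup_g ‖∂_{ijk}V(g)‖`. -/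
def M3 (V : (Fin 6 → E2) → ℝ) : ℝ :=
  ∑ i : Fin 6, ∑ j : Fin 6, ∑ k : Fin 6, ⨆ g : Fin 6 → E2, t3norm (pd3 V i j k g)

/-- Finiteness of `M₂`. -/
def M2fin (V : (Fin 6 → E2) → ℝ) : Prop :=
  ∀ i j : Fin 6, BddAbove (Set.range fun g : Fin 6 → E2 => matOpNorm (pd2 V i j g))

/-- Finiteness of `M₃`. -/
def M3fin (V : (Fin 6 → E2) → ℝ) : Prop :=
  ∀ i j k : Fin 6, BddAbove (Set.range fun g : Fin 6 → E2 => t3norm (pd3 V i j k g))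

/-- The class `𝒱`: `C³` potentials with the point symmetry `V((-g_{j+3})_j) = V(g)`. -/
def memV (V : (Fin 6 → E2) → ℝ) : Prop :=
  ContDiff ℝ 3 V ∧ ∀ g : Fin 6 → E2, V (fun j => -g (j + 3)) = V g

/-- Cauchy–Born stored energy `W(F) = V(F𝐚)/Ω₀`. -/
def Wf (V : (Fin 6 → E2) → ℝ) (F : Mat2) : ℝ := V (Famat F) / Om0

/-- `∂W(F) ∈ ℝ^{2×2}`. -/
def DW (V : (Fin 6 → E2) → ℝ) (F : Mat2) : Mat2 :=
  fun i k => deriv (fun t : ℝ => Wf V (F + t • Matrix.single i k 1)) 0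

/-- The matrix `G` with `G b₁ = v₁`, `G b₂ = v₂` (for linearly independent `b₁, b₂`). -/
def solve2 (b1 b2 v1 v2 : E2) : Mat2 := fun i k =>
  (if k = 0 then v1 i * b2 1 - v2 i * b1 1 else v2 i * b1 0 - v1 i * b2 0) /
    (b1 0 * b2 1 - b1 1 * b2 0)

/-- Triangles of the canonical triangulation `𝒯`: `(n, true)` is the upward triangle
with vertices `n, n+a₁, n+a₂`, and `(n, false)` the downward triangle with vertices
`n, n+a₁, n+a₆` (in lattice coordinates). -/
abbrev Tri := (ℤ × ℤ) × Bool

/-- The gradient `∂_T y` of the piecewise affine interpolant of `y` on `T`. -/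
def triGrad (y : ℤ × ℤ → E2) (T : Tri) : Mat2 :=
  if T.2 then solve2 (avec 1) (avec 2) (Dd 1 y T.1) (Dd 2 y T.1)
  else solve2 (avec 1) (avec 6) (Dd 1 y T.1) (Dd 6 y T.1)

/-- The vertices `T ∩ ℒ` of a triangle, in lattice coordinates. -/
def triVerts (T : Tri) : Finset (ℤ × ℤ) :=
  if T.2 then {T.1, T.1 + (1, 0), T.1 + (0, 1)} else {T.1, T.1 + (1, 0), T.1 + (1, -1)}

/-- `x_{T,j}`: the unique lattice point with `x_{T,j}, x_{T,j} + a_{j+1} ∈ T`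
(here `j : Fin 6` labels the direction `a_{j+1}`). -/
def xT (T : Tri) (j : Fin 6) : ℤ × ℤ :=
  T.1 + (if T.2 then
    (match (j : ℕ) with
     | 0 => ((0 : ℤ), (0 : ℤ)) | 1 => (0, 0) | 2 => (1, 0) | 3 => (1, 0) | 4 => (0, 1) | _ => (0, 1))
  else
    (match (j : ℕ) with
     | 0 => ((0 : ℤ), (0 : ℤ)) | 1 => (1, -1) | 2 => (1, -1) | 3 => (1, 0) | 4 => (1, 0) | _ => (0, 0)))

/-- The neighbouring triangle `T_j` of `T` sharing the edge with direction `a_{j+1}`. -/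
def nbr (T : Tri) (j : Fin 6) : Tri :=
  if T.2 then
    (T.1 + (match (j : ℕ) % 3 with | 0 => ((0 : ℤ), (0 : ℤ)) | 1 => (-1, 1) | _ => (0, 1)), false)
  else
    (T.1 + (match (j : ℕ) % 3 with | 0 => ((0 : ℤ), (0 : ℤ)) | 1 => (1, -1) | _ => (0, -1)), true)

/-- The triangle `T_{x,j} = conv{x, x + a_j, x + a_{j+1}}` (index `j` mod 6). -/
def Txj (x : ℤ × ℤ) (j : ℤ) : Tri :=
  match (j % 6).toNat with
  | 1 => (x, true)
  | 2 => (x + (-1, 1), false)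
  | 3 => (x + (-1, 0), true)
  | 4 => (x + (-1, 0), false)
  | 5 => (x + (0, -1), true)
  | _ => (x, false)

/-- The Cauchy–Born site potential `V^c(g) = (Ω₀/6) Σ_j W(∂_{T_{x,j}} y)` as a function
of the six differences `g = Dy(x)`. -/
def Vc (V : (Fin 6 → E2) → ℝ) (g : Fin 6 → E2) : ℝ :=
  Om0 / 6 * ∑ j : Fin 6, Wf V (solve2 (avec ((j : ℕ) + 1)) (avec ((j : ℕ) + 2)) (g j) (g (j + 1)))

/-- The atomistic stress `Σa(y;T)`. -/
def Sa (V : (Fin 6 → E2) → ℝ) (y : ℤ × ℤ → E2) (T : Tri) : Mat2 :=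
  Om0⁻¹ • ∑ j : Fin 6, outer (pd V j (Dfam y (xT T j))) (aFam j)

/-- The continuum stress `Σc¹(y;T) = ∂W(∂_T y)`. -/
def Sc1 (V : (Fin 6 → E2) → ℝ) (y : ℤ × ℤ → E2) (T : Tri) : Mat2 := DW V (triGrad y T)

/-- The continuum stress `Σc²(y;T)`. -/
def Sc2 (V : (Fin 6 → E2) → ℝ) (y : ℤ × ℤ → E2) (T : Tri) : Mat2 :=
  Om0⁻¹ • ∑ j : Fin 6, (2 : ℝ)⁻¹ •
    outer (pd V j (Famat (triGrad y T)) + pd V j (Famat (triGrad y (nbr T j)))) (aFam j)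

/-- The continuum stress `Σc³(y;T)`. -/
def Sc3 (V : (Fin 6 → E2) → ℝ) (y : ℤ × ℤ → E2) (T : Tri) : Mat2 :=
  Om0⁻¹ • ∑ j : Fin 6, outer (pd (Vc V) j (Dfam y (xT T j))) (aFam j)

/-- The interface region `ℐ` determined by the atomistic region `𝒜`. -/
def interf (A : Set (ℤ × ℤ)) : Set (ℤ × ℤ) :=
  {x | x ∉ A ∧ ∃ j : Fin 6, x + ed ((j : ℕ) + 1) ∈ A}

/-- The continuum region `𝒞 = ℒ ∖ (𝒜 ∪ ℐ)`. -/
def contR (A : Set (ℤ × ℤ)) : Set (ℤ × ℤ) := {x | x ∉ A ∧ x ∉ interf A}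

/-- The reconstructed interface potential `V^i(g) = V((Σ_i C_{j,i} g_i)_j)`. -/
def Vi (V : (Fin 6 → E2) → ℝ) (Cp : Fin 6 → Fin 6 → ℝ) (g : Fin 6 → E2) : ℝ :=
  V fun j => ∑ i : Fin 6, Cp j i • g i

/-- The hybrid site potential `V^ac_x`. -/
def Vac (V : (Fin 6 → E2) → ℝ) (C : ℤ × ℤ → Fin 6 → Fin 6 → ℝ) (A : Set (ℤ × ℤ))
    (x : ℤ × ℤ) : (Fin 6 → E2) → ℝ :=
  if x ∈ A then V else if x ∈ interf A then Vi V (C x) else Vc V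

/-- First variation `⟨δE_a(y), u⟩` of the atomistic energy. -/
def dEa (V : (Fin 6 → E2) → ℝ) (y u : ℤ × ℤ → E2) : ℝ :=
  ∑ᶠ n : ℤ × ℤ, ∑ j : Fin 6, dotE (pd V j (Dfam y n)) (Dfam u n j)

/-- First variation `⟨δE_c(y), u⟩` of the Cauchy–Born energy. -/
def dEc (V : (Fin 6 → E2) → ℝ) (y u : ℤ × ℤ → E2) : ℝ :=
  ∑ᶠ T : Tri, Om0 / 2 * frobI (DW V (triGrad y T)) (triGrad u T)

/-- First variation `⟨δE_ac(y), u⟩` of the a/c coupling energy. -/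
def dEac (V : (Fin 6 → E2) → ℝ) (C : ℤ × ℤ → Fin 6 → Fin 6 → ℝ) (A : Set (ℤ × ℤ))
    (y u : ℤ × ℤ → E2) : ℝ :=
  ∑ᶠ n : ℤ × ℤ, ∑ i : Fin 6, dotE (pd (Vac V C A n) i (Dfam y n)) (Dfam u n i)

/-- The a/c stress `Σac(y;T)`. -/
def Sac (V : (Fin 6 → E2) → ℝ) (C : ℤ × ℤ → Fin 6 → Fin 6 → ℝ) (A : Set (ℤ × ℤ))
    (y : ℤ × ℤ → E2) (T : Tri) : Mat2 :=
  Om0⁻¹ • ∑ j : Fin 6, outer (pd (Vac V C A (xT T j)) j (Dfam y (xT T j))) (aFam j)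

/-- `u ∈ 𝒰₀`: finitely supported displacement. -/
def FinSupp (u : ℤ × ℤ → E2) : Prop := (Function.support u).Finite

/-- `y ∈ 𝒴₀`: deformation with `y - id` finitely supported. -/
def inY0 (y : ℤ × ℤ → E2) : Prop := (Function.support fun n => y n - emb n).Finite

/-- The homogeneous deformation `y_F(x) = Fx`. -/
def yhom (F : Mat2) : ℤ × ℤ → E2 := fun n => mvec F (emb n)

/-- One-sidedness: `C_{j,i} = 0` unless `i ∈ {j-1, j, j+1}` (mod 6). -/
def oneSided (Cp : Fin 6 → Fin 6 → ℝ) : Prop :=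
  ∀ j i : Fin 6, i ≠ j - 1 → i ≠ j → i ≠ j + 1 → Cp j i = 0

/-- Local energy consistency: `C_{j,j-1} = C_{j,j+1} = 1 - C_{j,j}`. -/
def eCons (Cp : Fin 6 → Fin 6 → ℝ) : Prop :=
  ∀ j : Fin 6, Cp j (j - 1) = 1 - Cp j j ∧ Cp j (j + 1) = 1 - Cp j j

/-- The coefficients corresponding to the atomistic site potential (`C_{x,j} = 1`). -/
def atomC : Fin 6 → Fin 6 → ℝ := fun j i => if i = j then 1 else 0

/-- The coefficients corresponding to the Cauchy–Born site potential (`C_{x,j} = 2/3`). -/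
def cbC : Fin 6 → Fin 6 → ℝ := fun j i =>
  if i = j then 2 / 3 else if i = j - 1 ∨ i = j + 1 then 1 / 3 else 0

/-- The negative force `-f_ac(x; y_F) = Σ_{j,i} (C_{x-a_i,j,i} - C_{x,j,i}) ∂_j V(F𝐚)`. -/
def forceSum (C : ℤ × ℤ → Fin 6 → Fin 6 → ℝ) (V : (Fin 6 → E2) → ℝ) (F : Mat2)
    (x : ℤ × ℤ) : E2 :=
  ∑ j : Fin 6, ∑ i : Fin 6, (C (x - ed ((i : ℕ) + 1)) j i - C x j i) • pd V j (Famat F)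

/-- The force consistency condition (5.2) on the coefficients. -/
def fCons (C : ℤ × ℤ → Fin 6 → Fin 6 → ℝ) : Prop :=
  ∀ j : Fin 6, (j : ℕ) < 3 → ∀ x : ℤ × ℤ,
    ∑ i : Fin 6, (C (x - ed ((i : ℕ) + 1)) j i - C (x - ed ((i : ℕ) + 1)) (j + 3) i
      - C x j i + C x (j + 3) i) = 0

/-- `|D²y(x)| = max_{i,j} |D_i D_j y(x)|`. -/
def D2n (y : ℤ × ℤ → E2) (n : ℤ × ℤ) : ℝ :=
  ⨆ i : Fin 6, ⨆ j : Fin 6, ‖Dd ((i : ℕ) + 1) (Dd ((j : ℕ) + 1) y) n‖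

/-- `|D³y(x)| = max_{i,j,k} |D_i D_j D_k y(x)|`. -/
def D3n (y : ℤ × ℤ → E2) (n : ℤ × ℤ) : ℝ :=
  ⨆ i : Fin 6, ⨆ j : Fin 6, ⨆ k : Fin 6,
    ‖Dd ((i : ℕ) + 1) (Dd ((j : ℕ) + 1) (Dd ((k : ℕ) + 1) y)) n‖

/-- `ℓ^p` norm of a lattice function over a subset `S ⊆ ℒ`. -/
def lpNormS (p : ℝ≥0∞) (f : ℤ × ℤ → ℝ) (S : Set (ℤ × ℤ)) : ℝ :=
  if p = ⊤ then ⨆ x : S, |f x| else (∑ᶠ x ∈ S, |f x| ^ p.toReal) ^ (1 / p.toReal)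

/-- `‖∂u‖_{L^q}` for the piecewise affine interpolant. -/
def gradLp (q : ℝ≥0∞) (u : ℤ × ℤ → E2) : ℝ :=
  if q = ⊤ then ⨆ T : Tri, frobN (triGrad u T)
  else (∑ᶠ T : Tri, Om0 / 2 * frobN (triGrad u T) ^ q.toReal) ^ (1 / q.toReal)

/-- `𝒯_𝒜`: triangles with `T ∩ (ℐ ∪ 𝒞) = ∅`. -/
def TA (A : Set (ℤ × ℤ)) : Set Tri := {T | ∀ n ∈ triVerts T, n ∉ interf A ∧ n ∉ contR A}

/-- `𝒯_𝒞`: triangles with `T ∩ (ℐ ∪ 𝒜) = ∅`. -/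
def TC (A : Set (ℤ × ℤ)) : Set Tri := {T | ∀ n ∈ triVerts T, n ∉ interf A ∧ n ∉ A}

/-- `𝒯_ℐ = 𝒯 ∖ (𝒯_𝒜 ∪ 𝒯_𝒞)`. -/
def TI (A : Set (ℤ × ℤ)) : Set Tri := {T | T ∉ TA A ∧ T ∉ TC A}

/-- The midpoint of the edge `(x, x + a_j)`. -/
def edgeMid (x : ℤ × ℤ) (j : ℤ) : E2 := emb x + (2 : ℝ)⁻¹ • avec j

/-- The edge `(x, x+a_j)` belongs to `𝔉_𝒜` (it lies in a triangle of `𝒯_𝒜`). -/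
def edgeInA (A : Set (ℤ × ℤ)) (x : ℤ × ℤ) (j : ℤ) : Prop :=
  Txj x j ∈ TA A ∨ Txj x (j - 1) ∈ TA A

/-- The edge `(x, x+a_j)` belongs to `𝔉_𝒞`. -/
def edgeInC (A : Set (ℤ × ℤ)) (x : ℤ × ℤ) (j : ℤ) : Prop :=
  Txj x j ∈ TC A ∨ Txj x (j - 1) ∈ TC A

/-- Rotation by `π/2`. -/
def Jmat : Mat2 := !![0, -1; 1, 0]

/-- Midpoint continuity of a piecewise affine field: membership in `N1(𝒯)²`. -/
def midCont (ψ : Tri → E2 → E2) : Prop :=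
  ∀ (x : ℤ × ℤ) (j : ℤ), ψ (Txj x j) (edgeMid x j) = ψ (Txj x (j - 1)) (edgeMid x j)

/-- `ψ` is piecewise affine with Jacobian `G T` on each triangle `T`. -/
def affWith (ψ : Tri → E2 → E2) (G : Tri → Mat2) : Prop :=
  ∀ (T : Tri) (z w : E2), ψ T z - ψ T w = mvec (G T) (z - w)

/-- Assumption 4.1: every interface atom has exactly two interface neighbours and
at least one continuum neighbour. -/
def InterfaceOK (A : Set (ℤ × ℤ)) : Prop :=
  ∀ x ∈ interf A,
    ({j : Fin 6 | x + ed ((j : ℕ) + 1) ∈ interf A}).ncard = 2 ∧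
    ∃ j : Fin 6, x + ed ((j : ℕ) + 1) ∈ contR A

/-- The patch test: local energy consistency and local force consistency for all `V ∈ 𝒱`. -/
def PatchTest (C : ℤ × ℤ → Fin 6 → Fin 6 → ℝ) (A : Set (ℤ × ℤ)) : Prop :=
  (∀ V, memV V → ∀ F : Mat2, ∀ x ∈ interf A, Vi V (C x) (Famat F) = V (Famat F)) ∧
  (∀ V, memV V → ∀ F : Mat2, ∀ u, FinSupp u → dEac V C A (yhom F) u = 0)

/-- The closed triangle `T ⊆ ℝ²`. -/
def triSet (T : Tri) : Set E2 :=
  convexHull ℝ {emb T.1, emb (T.1 + (1, 0)), emb (T.1 + (if T.2 then ((0 : ℤ), (1 : ℤ)) else (1, -1)))}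

/-- The closed edge `[x, x + a_j] ⊆ ℝ²`. -/
def edgeSeg (x : ℤ × ℤ) (j : ℤ) : Set E2 := segment ℝ (emb x) (emb (x + ed j))

/-- The atomistic region of the flat interface: `{x ∈ ℒ : x₂ < 0}`. -/
def flatA : Set (ℤ × ℤ) := {n | emb n 1 < 0}

/-- The extended interface region `ℐ^ext = {x ∈ ℒ : dist(x, ℐ) ≤ 1}`. -/
def Iext (A : Set (ℤ × ℤ)) : Set (ℤ × ℤ) := {x | ∃ z ∈ interf A, ‖emb x - emb z‖ ≤ 1}

/-- Embedding `Fin 3 → Fin 6`. -/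
def jlift (j : Fin 3) : Fin 6 := ⟨(j : ℕ), by omega⟩

lemma toE2_apply (v : Fin 2 → ℝ) (i : Fin 2) : toE2 v i = v i := rfl

lemma avec0 (j : ℤ) : avec j 0 = Real.cos (((j : ℝ) - 1) * (Real.pi / 3)) := rfl
lemma avec1 (j : ℤ) : avec j 1 = Real.sin (((j : ℝ) - 1) * (Real.pi / 3)) := rfl

lemma avec_vals :
    (avec 1 0 = 1 ∧ avec 1 1 = 0) ∧ (avec 2 0 = 1/2 ∧ avec 2 1 = Real.sqrt 3 / 2) ∧
    (avec 3 0 = -(1/2) ∧ avec 3 1 = Real.sqrt 3 / 2) ∧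
    (avec 6 0 = 1/2 ∧ avec 6 1 = -(Real.sqrt 3 / 2)) := by
  have h2 : ((2:ℝ) - 1) * (Real.pi/3) = Real.pi/3 := by ring
  have h3 : ((3:ℝ) - 1) * (Real.pi/3) = Real.pi - Real.pi/3 := by ring
  have h6 : ((6:ℝ) - 1) * (Real.pi/3) = -(Real.pi/3) + 2*Real.pi := by ring
  refine ⟨⟨?_, ?_⟩, ⟨?_, ?_⟩, ⟨?_, ?_⟩, ⟨?_, ?_⟩⟩ <;>
    simp [avec0, avec1, h2, h3, h6, Real.cos_pi_sub, Real.sin_pi_sub,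
      Real.cos_add_two_pi, Real.sin_add_two_pi, Real.cos_pi_div_three, Real.sin_pi_div_three]

lemma e2ext {v w : E2} (h0 : v 0 = w 0) (h1 : v 1 = w 1) : v = w := by
  ext i; fin_cases i <;> assumption

lemma mvec_apply (F : Mat2) (v : E2) (i : Fin 2) :
    mvec F v i = F i 0 * v 0 + F i 1 * v 1 := by
  simp [mvec, toE2, Fin.sum_univ_two]

lemma sqrt3_pos : (0:ℝ) < Real.sqrt 3 := Real.sqrt_pos.2 (by norm_num)

lemma mvec_solve_fst {b1 b2 : E2} (hdet : b1 0 * b2 1 - b1 1 * b2 0 ≠ 0) (v1 v2 : E2) :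
    mvec (solve2 b1 b2 v1 v2) b1 = v1 := by
  refine e2ext ?_ ?_ <;>
  · rw [mvec_apply]; simp only [solve2, if_pos rfl, if_neg (by decide : (1:Fin 2) ≠ 0), eq_self_iff_true, if_true]
    rw [div_mul_eq_mul_div, div_mul_eq_mul_div, ← add_div, div_eq_iff hdet]; ring

lemma mvec_solve_snd {b1 b2 : E2} (hdet : b1 0 * b2 1 - b1 1 * b2 0 ≠ 0) (v1 v2 : E2) :
    mvec (solve2 b1 b2 v1 v2) b2 = v2 := by
  refine e2ext ?_ ?_ <;>
  · rw [mvec_apply]; simp only [solve2, if_pos rfl, if_neg (by decide : (1:Fin 2) ≠ 0), eq_self_iff_true, if_true]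
    rw [div_mul_eq_mul_div, div_mul_eq_mul_div, ← add_div, div_eq_iff hdet]; ring

lemma det12 : avec 1 0 * avec 2 1 - avec 1 1 * avec 2 0 ≠ 0 := by
  obtain ⟨⟨a,b⟩,⟨c,d⟩,_,_⟩ := avec_vals
  rw [a,b,d]; simp only [mul_one, mul_zero, one_mul, zero_mul, sub_zero]; positivity

lemma det16 : avec 1 0 * avec 6 1 - avec 1 1 * avec 6 0 ≠ 0 := by
  obtain ⟨⟨a,b⟩,_,_,⟨e,f⟩⟩ := avec_vals
  rw [a,b,f]; simp only [one_mul, zero_mul, sub_zero, neg_ne_zero]; positivity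

lemma mvec_sub (F : Mat2) (v w : E2) : mvec F (v - w) = mvec F v - mvec F w := by
  refine e2ext ?_ ?_ <;>
  · simp only [mvec_apply, PiLp.sub_apply]; ring

lemma mvec_neg (F : Mat2) (v : E2) : mvec F (-v) = -mvec F v := by
  refine e2ext ?_ ?_ <;>
  · simp only [mvec_apply, PiLp.neg_apply]; ring

lemma avec3_sub : avec 3 = avec 2 - avec 1 := by
  obtain ⟨⟨a,b⟩,⟨c,d⟩,⟨e,f⟩,_⟩ := avec_vals
  refine e2ext ?_ ?_ <;>
  · simp only [PiLp.sub_apply, a,b,c,d,e,f]; ring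

lemma avec2_sub : avec 2 = avec 1 - avec 6 := by
  obtain ⟨⟨a,b⟩,⟨c,d⟩,_,⟨e,f⟩⟩ := avec_vals
  refine e2ext ?_ ?_ <;>
  · simp only [PiLp.sub_apply, a,b,c,d,e,f]; ring

lemma avec3_neg6 : avec 3 = -avec 6 := by
  obtain ⟨_,_,⟨e,f⟩,⟨g,h⟩⟩ := avec_vals
  refine e2ext ?_ ?_ <;>
  · simp only [PiLp.neg_apply, e,f,g,h]; try ring

lemma avec_add_three (j : ℤ) : avec (j + 3) = -avec j := by
  have key : ((j:ℝ) + 3 - 1) * (Real.pi/3) = ((j:ℝ) - 1) * (Real.pi/3) + Real.pi := by ring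
  refine e2ext ?_ ?_ <;>
  · simp only [avec0, avec1, PiLp.neg_apply, Int.cast_add, Int.cast_ofNat]
    rw [key]
    simp [Real.cos_add_pi, Real.sin_add_pi, avec0, avec1]

lemma dirDeriv (V : (Fin 6 → E2) → ℝ) (hV : Differentiable ℝ V) (g G : Fin 6 → E2) :
    deriv (fun t : ℝ => V (g + t • G)) 0 = fderiv ℝ V g G := by
  have h1 : HasDerivAt (fun t : ℝ => g + t • G) G 0 := by
    simpa using ((hasDerivAt_id (0:ℝ)).smul_const G).const_add g
  have h2 : HasFDerivAt V (fderiv ℝ V g) (g + (0:ℝ) • G) := by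
    simpa using (hV g).hasFDerivAt
  exact (h2.comp_hasDerivAt 0 h1).deriv

lemma pd_eq (V : (Fin 6 → E2) → ℝ) (hV : Differentiable ℝ V) (j : Fin 6) (g : Fin 6 → E2)
    (k : Fin 2) : pd V j g k = fderiv ℝ V g (unitv j k) := dirDeriv V hV g (unitv j k)

lemma basis_expand (G : Fin 6 → E2) : ∑ j : Fin 6, ∑ k : Fin 2, G j k • unitv j k = G := by
  funext i
  simp only [Finset.sum_apply, Pi.smul_apply, unitv, smul_ite, smul_zero]
  rw [Finset.sum_comm]
  simp only [Finset.sum_ite_eq, Finset.mem_univ, if_true]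
  ext l
  rw [Fin.sum_univ_two]
  show G i 0 • toE2 (Pi.single 0 1) l + G i 1 • toE2 (Pi.single 1 1) l = G i l
  fin_cases l <;> simp [toE2, Pi.single_apply]

lemma Famat_line (F E : Mat2) (t : ℝ) :
    Famat (F + t • E) = Famat F + t • Famat E := by
  funext j
  refine e2ext ?_ ?_ <;>
  · simp only [Famat, mvec_apply, Pi.add_apply, Pi.smul_apply, PiLp.add_apply, PiLp.smul_apply,
      Matrix.add_apply, Matrix.smul_apply, smul_eq_mul]
    ring

lemma fderiv_expand (V : (Fin 6 → E2) → ℝ) (hV : Differentiable ℝ V) (g G : Fin 6 → E2) :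
    (fderiv ℝ V g) G = ∑ j : Fin 6, ∑ k : Fin 2, G j k * pd V j g k := by
  conv_lhs => rw [← basis_expand G]
  rw [map_sum]
  refine Finset.sum_congr rfl fun j _ => ?_
  rw [map_sum]
  refine Finset.sum_congr rfl fun k _ => ?_
  rw [map_smul, pd_eq V hV, smul_eq_mul]

lemma Famat_std (i : Fin 2) (k : Fin 2) (j : Fin 6) (l : Fin 2) :
    Famat (Matrix.single i k 1) j l = if i = l then aFam j k else 0 := by
  simp only [Famat, mvec_apply, Matrix.single, Matrix.of_apply]
  fin_cases i <;> fin_cases k <;> fin_cases l <;> simp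

lemma DW_eq (V : (Fin 6 → E2) → ℝ) (hV : Differentiable ℝ V) (F : Mat2) (i k : Fin 2) :
    DW V F i k = Om0⁻¹ * ∑ j : Fin 6, pd V j (Famat F) i * aFam j k := by
  unfold DW Wf
  have : (fun t : ℝ => V (Famat (F + t • Matrix.single i k 1)) / Om0)
      = fun t : ℝ => V (Famat F + t • Famat (Matrix.single i k 1)) / Om0 := by
    funext t; rw [Famat_line]
  rw [this, deriv_div_const, dirDeriv V hV, fderiv_expand V hV]
  rw [div_eq_inv_mul]
  congr 1
  refine Finset.sum_congr rfl fun j _ => ?_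
  rw [Fin.sum_univ_two, Famat_std, Famat_std]
  fin_cases i <;> simp <;> ring

lemma aFam_add_three (j : Fin 6) : aFam (j + 3) = -aFam j := by
  have h4 : (4:ℤ) = 1 + 3 := by norm_num
  have h5 : (5:ℤ) = 2 + 3 := by norm_num
  have h6 : (6:ℤ) = 3 + 3 := by norm_num
  fin_cases j
  · show aFam 3 = -aFam 0
    show avec 4 = -avec 1
    rw [h4, avec_add_three]
  · show avec 5 = -avec 2
    rw [h5, avec_add_three]
  · show avec 6 = -avec 3
    rw [h6, avec_add_three]
  · show avec 1 = -avec 4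
    rw [h4, avec_add_three, neg_neg]
  · show avec 2 = -avec 5
    rw [h5, avec_add_three, neg_neg]
  · show avec 3 = -avec 6
    rw [h6, avec_add_three, neg_neg]

lemma sigma_Famat (F : Mat2) : (fun i : Fin 6 => -(Famat F (i + 3))) = Famat F := by
  funext i
  rw [show Famat F (i+3) = mvec F (aFam (i+3)) from rfl, aFam_add_three, mvec_neg, neg_neg]
  rfl

lemma unitv_shift (J : Fin 6) (k : Fin 2) (i : Fin 6) :
    unitv J k (i + 3) = unitv (J + 3) k i := by
  have : (i + 3 = J) = (i = J + 3) := by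
    apply propext; revert i J; decide
  simp only [unitv, this]

lemma pd_flip (V : (Fin 6 → E2) → ℝ) (hV : memV V) (F : Mat2) (j : Fin 6) :
    pd V (j + 3) (Famat F) = -(pd V j (Famat F)) := by
  have hdiff : Differentiable ℝ V := (hV.1.differentiable (by norm_num))
  ext k
  have hfun : (fun t : ℝ => V (Famat F + t • unitv (j + 3) k))
      = fun t : ℝ => V (Famat F + (-t) • unitv j k) := by
    funext t
    rw [← hV.2 (Famat F + t • unitv (j + 3) k)]
    congr 1
    funext i
    show -((Famat F + t • unitv (j+3) k) (i + 3)) = (Famat F + (-t) • unitv j k) i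
    have h33 : j + 3 + 3 = j := by
      rw [add_assoc, show (3 + 3 : Fin 6) = 0 by decide, add_zero]
    rw [Pi.add_apply, Pi.add_apply, Pi.smul_apply, Pi.smul_apply, unitv_shift, h33, neg_add]
    congr 1
    · exact congrFun (sigma_Famat F) i
    · rw [neg_smul]
  show deriv (fun t : ℝ => V (Famat F + t • unitv (j+3) k)) 0 = -(pd V j (Famat F) k)
  rw [hfun]
  have : (fun t : ℝ => V (Famat F + (-t) • unitv j k))
      = fun t : ℝ => (fun s : ℝ => V (Famat F + s • unitv j k)) (-t) := rfl
  have hd := deriv_comp_neg (f := fun s : ℝ => V (Famat F + s • unitv j k)) (x := (0:ℝ))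
  rw [neg_zero] at hd
  rw [this]
  exact hd

lemma Om0_pos : (0:ℝ) < Om0 := by
  unfold Om0; positivity

lemma jlift0 : jlift 0 = 0 := rfl
lemma jlift1 : jlift 1 = 1 := rfl
lemma jlift2 : jlift 2 = 2 := rfl

lemma CB2 (V : (Fin 6 → E2) → ℝ) (hV : memV V) (F G : Mat2) :
    Om0 / 2 * frobI (DW V F) G
      = ∑ j : Fin 3, dotE (pd V (jlift j) (Famat F)) (mvec G (aFam (jlift j))) := by
  have hdiff : Differentiable ℝ V := (hV.1.differentiable (by norm_num))
  have h3 : ∀ i, pd V 3 (Famat F) i = -(pd V 0 (Famat F) i) := fun i => by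
    rw [show (3:Fin 6) = 0 + 3 by decide, pd_flip V hV]; rfl
  have h4 : ∀ i, pd V 4 (Famat F) i = -(pd V 1 (Famat F) i) := fun i => by
    rw [show (4:Fin 6) = 1 + 3 by decide, pd_flip V hV]; rfl
  have h5 : ∀ i, pd V 5 (Famat F) i = -(pd V 2 (Famat F) i) := fun i => by
    rw [show (5:Fin 6) = 2 + 3 by decide, pd_flip V hV]; rfl
  have a3 : ∀ k, aFam 3 k = -(aFam 0 k) := fun k => by
    rw [show (3:Fin 6) = 0 + 3 by decide, aFam_add_three]; rfl
  have a4 : ∀ k, aFam 4 k = -(aFam 1 k) := fun k => by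
    rw [show (4:Fin 6) = 1 + 3 by decide, aFam_add_three]; rfl
  have a5 : ∀ k, aFam 5 k = -(aFam 2 k) := fun k => by
    rw [show (5:Fin 6) = 2 + 3 by decide, aFam_add_three]; rfl
  have hOm : Om0 ≠ 0 := Om0_pos.ne'
  simp only [frobI, dotE, Fin.sum_univ_two, Fin.sum_univ_three, Fin.sum_univ_six,
    jlift0, jlift1, jlift2, mvec_apply, DW_eq V hdiff, h3, h4, h5, a3, a4, a5]
  field_simp
  ring

lemma ed1 : ed 1 = (1,0) := rfl
lemma ed2 : ed 2 = (0,1) := rfl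
lemma ed3 : ed 3 = (-1,1) := rfl
lemma ed4 : ed 4 = (-1,0) := rfl
lemma ed5 : ed 5 = (0,-1) := rfl
lemma ed6 : ed 6 = (1,-1) := rfl

def boxB : Finset (ℤ×ℤ) := Finset.Icc (-3,-3) (3,3)

example : -((0:ℤ×ℤ) + ed ((((0:Fin 6)):ℕ)+1)) ∈ boxB := by decide
example : ((1,-1) : ℤ×ℤ) ∈ boxB := by decide
example (x c : ℤ×ℤ) : (x + c) + -c = x := by ring

lemma dotE_zero_right (v : E2) : dotE v 0 = 0 := by simp [dotE]

lemma dotE_sub_left (a b w : E2) : dotE (a - b) w = dotE a w - dotE b w := by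
  simp [dotE, PiLp.sub_apply, sub_mul, Finset.sum_sub_distrib]

lemma dotE_add_left (a b w : E2) : dotE (a + b) w = dotE a w + dotE b w := by
  simp [dotE, PiLp.add_apply, add_mul, Finset.sum_add_distrib]

lemma dotE_neg_right (v w : E2) : dotE v (-w) = -(dotE v w) := by
  simp [dotE, PiLp.neg_apply, Finset.sum_neg_distrib]

lemma Dd_ne (u : ℤ×ℤ → E2) (e : ℤ) (z : ℤ×ℤ) (h : Dd e u z ≠ 0) :
    u (z + ed e) ≠ 0 ∨ u z ≠ 0 := by
  by_contra hc
  push_neg at hc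
  exact h (by simp [Dd, hc.1, hc.2])

lemma Dd_flip1 (u : ℤ×ℤ → E2) (n : ℤ×ℤ) : Dd 4 u n = -(Dd 1 u (n + (-1,0))) := by
  simp only [Dd, ed1, ed4]
  rw [add_assoc, show ((-1,0) : ℤ×ℤ) + (1,0) = 0 by decide, add_zero]
  abel

lemma Dd_flip2 (u : ℤ×ℤ → E2) (n : ℤ×ℤ) : Dd 5 u n = -(Dd 2 u (n + (0,-1))) := by
  simp only [Dd, ed2, ed5]
  rw [add_assoc, show ((0,-1) : ℤ×ℤ) + (0,1) = 0 by decide, add_zero]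
  abel

lemma Dd_flip3 (u : ℤ×ℤ → E2) (n : ℤ×ℤ) : Dd 6 u n = -(Dd 3 u (n + (1,-1))) := by
  simp only [Dd, ed3, ed6]
  rw [add_assoc, show ((1,-1) : ℤ×ℤ) + (-1,1) = 0 by decide, add_zero]
  abel

lemma sum_of_support {f : ℤ×ℤ → ℝ} {S T : Finset (ℤ×ℤ)} (hS : ∀ x, f x ≠ 0 → x ∈ S)
    (hT : ∀ x, f x ≠ 0 → x ∈ T) : ∑ x ∈ S, f x = ∑ x ∈ T, f x := by
  rw [← finsum_eq_sum_of_support_subset f (fun x hx => hS x hx),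
    ← finsum_eq_sum_of_support_subset f (fun x hx => hT x hx)]

lemma sum_shift {f : ℤ×ℤ → ℝ} {S : Finset (ℤ×ℤ)} (c : ℤ×ℤ)
    (h : ∀ x, f x ≠ 0 → x ∈ S ∧ x - c ∈ S) :
    ∑ x ∈ S, f (x + c) = ∑ x ∈ S, f x := by
  rw [← Finset.sum_image (g := (· + c)) (f := f)
    (fun x _ y _ hxy => by simpa using hxy)]
  exact sum_of_support
    (fun x hx => Finset.mem_image.2 ⟨x - c, (h x hx).2, by ring⟩)
    (fun x hx => (h x hx).1)

lemma Dfam_0 (u : ℤ×ℤ → E2) (n : ℤ×ℤ) : Dfam u n 0 = Dd 1 u n := by simp only [Dfam]; norm_num [show (((0:Fin 6)):ℕ) = 0 from rfl]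
lemma Dfam_1 (u : ℤ×ℤ → E2) (n : ℤ×ℤ) : Dfam u n 1 = Dd 2 u n := by simp only [Dfam]; norm_num [show (((1:Fin 6)):ℕ) = 1 from rfl]
lemma Dfam_2 (u : ℤ×ℤ → E2) (n : ℤ×ℤ) : Dfam u n 2 = Dd 3 u n := by simp only [Dfam]; norm_num [show (((2:Fin 6)):ℕ) = 2 from rfl]
lemma Dfam_3 (u : ℤ×ℤ → E2) (n : ℤ×ℤ) : Dfam u n 3 = Dd 4 u n := by simp only [Dfam]; norm_num [show (((3:Fin 6)):ℕ) = 3 from rfl]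
lemma Dfam_4 (u : ℤ×ℤ → E2) (n : ℤ×ℤ) : Dfam u n 4 = Dd 5 u n := by simp only [Dfam]; norm_num [show (((4:Fin 6)):ℕ) = 4 from rfl]
lemma Dfam_5 (u : ℤ×ℤ → E2) (n : ℤ×ℤ) : Dfam u n 5 = Dd 6 u n := by simp only [Dfam]; norm_num [show (((5:Fin 6)):ℕ) = 5 from rfl]

lemma jl03 : jlift 0 + 3 = (3 : Fin 6) := rfl
lemma jl13 : jlift 1 + 3 = (4 : Fin 6) := rfl
lemma jl23 : jlift 2 + 3 = (5 : Fin 6) := rfl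

lemma cast0 : ((((0:Fin 3) : ℕ)) : ℤ) + 1 = 1 := by norm_num
lemma cast1 : ((((1:Fin 3) : ℕ)) : ℤ) + 1 = 2 := by norm_num
lemma cast2 : ((((2:Fin 3) : ℕ)) : ℤ) + 1 = 3 := by norm_num

lemma atom_rep (V : (Fin 6 → E2) → ℝ) (y u : ℤ × ℤ → E2) (hu : FinSupp u) :
    dEa V y u = ∑ᶠ x : ℤ × ℤ, ∑ j : Fin 3,
        dotE (pd V (jlift j) (Dfam y x) -
              pd V (jlift j + 3) (Dfam y (x + ed ((j : ℕ) + 1))))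
          (Dd ((j : ℕ) + 1) u x) := by
  classical
  set S : Finset (ℤ×ℤ) := boxB.biUnion (fun d => hu.toFinset.image (· + d)) with hSdef
  have hmem : ∀ x c : ℤ×ℤ, u (x + c) ≠ 0 → -c ∈ boxB → x ∈ S := by
    intro x c hx hc
    refine Finset.mem_biUnion.2 ⟨-c, hc, Finset.mem_image.2 ⟨x + c, ?_, by ring⟩⟩
    exact (Set.Finite.mem_toFinset (hs := hu)).2 hx
  have hDdS : ∀ (e : ℤ) (c x : ℤ×ℤ), Dd e u (x + c) ≠ 0 → -(c + ed e) ∈ boxB →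
      -c ∈ boxB → x ∈ S := by
    intro e c x h h1 h2
    rcases Dd_ne u e _ h with h' | h'
    · exact hmem x (c + ed e) (by rwa [← add_assoc]) h1
    · exact hmem x c h' h2
  have hDd0 : ∀ (e : ℤ) (x : ℤ×ℤ), Dd e u x ≠ 0 → -(ed e) ∈ boxB → x ∈ S := by
    intro e x h h1
    exact hDdS e 0 x (by rwa [add_zero]) (by rwa [zero_add]) (by decide)
  have hL : dEa V y u = ∑ n ∈ S, ∑ j : Fin 6, dotE (pd V j (Dfam y n)) (Dfam u n j) := by
    refine finsum_eq_sum_of_support_subset _ fun n hn => ?_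
    simp only [Function.mem_support] at hn
    obtain ⟨j, -, hj⟩ := Finset.exists_ne_zero_of_sum_ne_zero hn
    have hd : Dfam u n j ≠ 0 := fun h0 => hj (by rw [h0, dotE_zero_right])
    revert hd
    simp only [Dfam]
    fin_cases j <;> exact fun hd => hDd0 _ n hd (by decide)
  have hR : (∑ᶠ x : ℤ × ℤ, ∑ j : Fin 3,
        dotE (pd V (jlift j) (Dfam y x) -
              pd V (jlift j + 3) (Dfam y (x + ed ((j : ℕ) + 1))))
          (Dd ((j : ℕ) + 1) u x))
      = ∑ x ∈ S, ∑ j : Fin 3,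
        dotE (pd V (jlift j) (Dfam y x) -
              pd V (jlift j + 3) (Dfam y (x + ed ((j : ℕ) + 1))))
          (Dd ((j : ℕ) + 1) u x) := by
    refine finsum_eq_sum_of_support_subset _ fun x hx => ?_
    simp only [Function.mem_support] at hx
    obtain ⟨j, -, hj⟩ := Finset.exists_ne_zero_of_sum_ne_zero hx
    have hd : Dd ((j : ℕ) + 1) u x ≠ 0 := fun h0 => hj (by rw [h0, dotE_zero_right])
    revert hd
    fin_cases j <;> exact fun hd => hDd0 _ x hd (by decide)
  rw [hL, hR]
  -- shift identities
  have h3 : (∑ n ∈ S, dotE (pd V 3 (Dfam y n)) (Dd 4 u n))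
      = -∑ x ∈ S, dotE (pd V 3 (Dfam y (x + (1,0)))) (Dd 1 u x) := by
    have hs := sum_shift (f := fun x => dotE (pd V 3 (Dfam y (x + (1,0)))) (Dd 1 u x))
      (S := S) ((-1,0)) ?_
    · rw [← hs, ← Finset.sum_neg_distrib]
      refine Finset.sum_congr rfl fun n _ => ?_
      rw [Dd_flip1, dotE_neg_right,
        show n + (-1,0) + (1,0) = n by
          rw [add_assoc, show ((-1,0) : ℤ×ℤ) + (1,0) = 0 by decide, add_zero]]
    · intro x hx
      have hd : Dd 1 u x ≠ 0 := fun h0 => hx (by simp only [h0, dotE_zero_right])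
      constructor
      · exact hDd0 1 x hd (by decide)
      · rw [show x - ((-1,0) : ℤ×ℤ) = x + (1,0) by
          rw [sub_eq_add_neg, show -((-1,0):ℤ×ℤ) = (1,0) by decide]]
        refine hDdS 1 ((-1,0)) (x + (1,0)) ?_ (by decide) (by decide)
        rwa [add_assoc, show ((1,0) : ℤ×ℤ) + (-1,0) = 0 by decide, add_zero]
  have h4 : (∑ n ∈ S, dotE (pd V 4 (Dfam y n)) (Dd 5 u n))
      = -∑ x ∈ S, dotE (pd V 4 (Dfam y (x + (0,1)))) (Dd 2 u x) := by
    have hs := sum_shift (f := fun x => dotE (pd V 4 (Dfam y (x + (0,1)))) (Dd 2 u x))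
      (S := S) ((0,-1)) ?_
    · rw [← hs, ← Finset.sum_neg_distrib]
      refine Finset.sum_congr rfl fun n _ => ?_
      rw [Dd_flip2, dotE_neg_right,
        show n + (0,-1) + (0,1) = n by
          rw [add_assoc, show ((0,-1) : ℤ×ℤ) + (0,1) = 0 by decide, add_zero]]
    · intro x hx
      have hd : Dd 2 u x ≠ 0 := fun h0 => hx (by simp only [h0, dotE_zero_right])
      constructor
      · exact hDd0 2 x hd (by decide)
      · rw [show x - ((0,-1) : ℤ×ℤ) = x + (0,1) by
          rw [sub_eq_add_neg, show -((0,-1):ℤ×ℤ) = (0,1) by decide]]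
        refine hDdS 2 ((0,-1)) (x + (0,1)) ?_ (by decide) (by decide)
        rwa [add_assoc, show ((0,1) : ℤ×ℤ) + (0,-1) = 0 by decide, add_zero]
  have h5 : (∑ n ∈ S, dotE (pd V 5 (Dfam y n)) (Dd 6 u n))
      = -∑ x ∈ S, dotE (pd V 5 (Dfam y (x + (-1,1)))) (Dd 3 u x) := by
    have hs := sum_shift (f := fun x => dotE (pd V 5 (Dfam y (x + (-1,1)))) (Dd 3 u x))
      (S := S) ((1,-1)) ?_
    · rw [← hs, ← Finset.sum_neg_distrib]
      refine Finset.sum_congr rfl fun n _ => ?_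
      rw [Dd_flip3, dotE_neg_right,
        show n + (1,-1) + (-1,1) = n by
          rw [add_assoc, show ((1,-1) : ℤ×ℤ) + (-1,1) = 0 by decide, add_zero]]
    · intro x hx
      have hd : Dd 3 u x ≠ 0 := fun h0 => hx (by simp only [h0, dotE_zero_right])
      constructor
      · exact hDd0 3 x hd (by decide)
      · rw [show x - ((1,-1) : ℤ×ℤ) = x + (-1,1) by
          rw [sub_eq_add_neg, show -((1,-1):ℤ×ℤ) = (-1,1) by decide]]
        refine hDdS 3 ((1,-1)) (x + (-1,1)) ?_ (by decide) (by decide)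
        rwa [add_assoc, show ((-1,1) : ℤ×ℤ) + (1,-1) = 0 by decide, add_zero]
  simp only [Fin.sum_univ_six, Fin.sum_univ_three, Dfam_0, Dfam_1, Dfam_2, Dfam_3, Dfam_4,
    Dfam_5, jl03, jl13, jl23, jlift0, jlift1, jlift2, cast0, cast1, cast2, ed1, ed2, ed3,
    dotE_sub_left]
  simp only [Finset.sum_add_distrib, Finset.sum_sub_distrib]
  rw [h3, h4, h5]
  abel

lemma aFam_0 : aFam 0 = avec 1 := by simp [aFam]
lemma aFam_1 : aFam 1 = avec 2 := by simp [aFam]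
lemma aFam_2 : aFam 2 = avec 3 := by simp [aFam]

lemma tg_up (u : ℤ×ℤ → E2) (n : ℤ×ℤ) :
    triGrad u (n, true) = solve2 (avec 1) (avec 2) (Dd 1 u n) (Dd 2 u n) := by
  simp [triGrad]

lemma tg_dn (u : ℤ×ℤ → E2) (n : ℤ×ℤ) :
    triGrad u (n, false) = solve2 (avec 1) (avec 6) (Dd 1 u n) (Dd 6 u n) := by
  simp [triGrad]

lemma up1 (u : ℤ×ℤ → E2) (n : ℤ×ℤ) : mvec (triGrad u (n,true)) (avec 1) = Dd 1 u n := by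
  rw [tg_up]; exact mvec_solve_fst det12 _ _
lemma up2 (u : ℤ×ℤ → E2) (n : ℤ×ℤ) : mvec (triGrad u (n,true)) (avec 2) = Dd 2 u n := by
  rw [tg_up]; exact mvec_solve_snd det12 _ _
lemma up3 (u : ℤ×ℤ → E2) (n : ℤ×ℤ) :
    mvec (triGrad u (n,true)) (avec 3) = Dd 2 u n - Dd 1 u n := by
  rw [avec3_sub, mvec_sub, up1, up2]
lemma dn1 (u : ℤ×ℤ → E2) (n : ℤ×ℤ) : mvec (triGrad u (n,false)) (avec 1) = Dd 1 u n := by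
  rw [tg_dn]; exact mvec_solve_fst det16 _ _
lemma dn6 (u : ℤ×ℤ → E2) (n : ℤ×ℤ) : mvec (triGrad u (n,false)) (avec 6) = Dd 6 u n := by
  rw [tg_dn]; exact mvec_solve_snd det16 _ _
lemma dn2 (u : ℤ×ℤ → E2) (n : ℤ×ℤ) :
    mvec (triGrad u (n,false)) (avec 2) = Dd 1 u n - Dd 6 u n := by
  rw [avec2_sub, mvec_sub, dn1, dn6]
lemma dn3 (u : ℤ×ℤ → E2) (n : ℤ×ℤ) :
    mvec (triGrad u (n,false)) (avec 3) = -(Dd 6 u n) := by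
  rw [avec3_neg6, mvec_neg, dn6]

lemma DdA (u : ℤ×ℤ → E2) (n : ℤ×ℤ) : Dd 2 u n - Dd 1 u n = Dd 3 u (n + (1,0)) := by
  simp only [Dd, ed1, ed2, ed3]
  rw [add_assoc, show ((1,0) : ℤ×ℤ) + (-1,1) = (0,1) by decide]
  abel

lemma DdB (u : ℤ×ℤ → E2) (n : ℤ×ℤ) : Dd 1 u n - Dd 6 u n = Dd 2 u (n + (1,-1)) := by
  simp only [Dd, ed1, ed2, ed6]
  rw [add_assoc, show ((1,-1) : ℤ×ℤ) + (0,1) = (1,0) by decide]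
  abel

lemma DdC (u : ℤ×ℤ → E2) (n : ℤ×ℤ) : -(Dd 6 u n) = Dd 3 u (n + (1,-1)) := by
  rw [Dd_flip3, neg_neg]

lemma f_up (V : (Fin 6 → E2) → ℝ) (hV : memV V) (y u : ℤ×ℤ → E2) (n : ℤ×ℤ) :
    Om0/2 * frobI (DW V (triGrad y (n,true))) (triGrad u (n,true))
      = dotE (pd V 0 (Famat (triGrad y (n,true)))) (Dd 1 u n)
      + dotE (pd V 1 (Famat (triGrad y (n,true)))) (Dd 2 u n)
      + dotE (pd V 2 (Famat (triGrad y (n,true)))) (Dd 3 u (n + (1,0))) := by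
  rw [CB2 V hV, Fin.sum_univ_three, jlift0, jlift1, jlift2, aFam_0, aFam_1, aFam_2,
    up1, up2, up3, DdA]

lemma f_dn (V : (Fin 6 → E2) → ℝ) (hV : memV V) (y u : ℤ×ℤ → E2) (n : ℤ×ℤ) :
    Om0/2 * frobI (DW V (triGrad y (n,false))) (triGrad u (n,false))
      = dotE (pd V 0 (Famat (triGrad y (n,false)))) (Dd 1 u n)
      + dotE (pd V 1 (Famat (triGrad y (n,false)))) (Dd 2 u (n + (1,-1)))
      + dotE (pd V 2 (Famat (triGrad y (n,false)))) (Dd 3 u (n + (1,-1))) := by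
  rw [CB2 V hV, Fin.sum_univ_three, jlift0, jlift1, jlift2, aFam_0, aFam_1, aFam_2,
    dn1, dn2, dn3, DdB, DdC]

lemma Txj_0 (x : ℤ×ℤ) : Txj x 0 = (x, false) := rfl
lemma Txj_1 (x : ℤ×ℤ) : Txj x 1 = (x, true) := rfl
lemma Txj_2 (x : ℤ×ℤ) : Txj x 2 = (x + (-1,1), false) := rfl
lemma Txj_3 (x : ℤ×ℤ) : Txj x 3 = (x + (-1,0), true) := rfl

lemma solve2_zero (b1 b2 : E2) : solve2 b1 b2 0 0 = 0 := by
  funext i k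
  simp [solve2]

lemma frobI_zero_right (A : Mat2) : frobI A 0 = 0 := by simp [frobI]

lemma z01 : (0:ℤ)+1 = 1 := by norm_num
lemma z11 : (1:ℤ)+1 = 2 := by norm_num
lemma z21 : (2:ℤ)+1 = 3 := by norm_num

lemma castz0 : ((((0:Fin 3) : ℕ)) : ℤ) = 0 := by norm_num
lemma castz1 : ((((1:Fin 3) : ℕ)) : ℤ) = 1 := by norm_num
lemma castz2 : ((((2:Fin 3) : ℕ)) : ℤ) = 2 := by norm_num

set_option maxHeartbeats 2000000 in
lemma cb_rep (V : (Fin 6 → E2) → ℝ) (hV : memV V) (y u : ℤ × ℤ → E2) (hu : FinSupp u) :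
    dEc V y u = ∑ᶠ x : ℤ × ℤ, ∑ j : Fin 3,
        dotE (pd V (jlift j) (Famat (triGrad y (Txj x ((j : ℕ) + 1)))) +
              pd V (jlift j) (Famat (triGrad y (Txj x (j : ℕ)))))
          (Dd ((j : ℕ) + 1) u x) := by
  classical
  set S : Finset (ℤ×ℤ) := boxB.biUnion (fun d => hu.toFinset.image (· + d)) with hSdef
  have hmem : ∀ x c : ℤ×ℤ, u (x + c) ≠ 0 → -c ∈ boxB → x ∈ S := by
    intro x c hx hc
    refine Finset.mem_biUnion.2 ⟨-c, hc, Finset.mem_image.2 ⟨x + c, ?_, by ring⟩⟩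
    exact (Set.Finite.mem_toFinset (hs := hu)).2 hx
  have hDdS : ∀ (e : ℤ) (c x : ℤ×ℤ), Dd e u (x + c) ≠ 0 → -(c + ed e) ∈ boxB →
      -c ∈ boxB → x ∈ S := by
    intro e c x h h1 h2
    rcases Dd_ne u e _ h with h' | h'
    · exact hmem x (c + ed e) (by rwa [← add_assoc]) h1
    · exact hmem x c h' h2
  have hDd0 : ∀ (e : ℤ) (x : ℤ×ℤ), Dd e u x ≠ 0 → -(ed e) ∈ boxB → x ∈ S := by
    intro e x h h1
    exact hDdS e 0 x (by rwa [add_zero]) (by rwa [zero_add]) (by decide)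
  have htg : ∀ n b, triGrad u (n,b) ≠ 0 → n ∈ S := by
    intro n b h
    by_cases h1 : Dd 1 u n = 0
    · by_cases h2 : Dd 2 u n = 0
      · by_cases h6 : Dd 6 u n = 0
        · exfalso; apply h; cases b
          · rw [tg_dn, h1, h6, solve2_zero]
          · rw [tg_up, h1, h2, solve2_zero]
        · exact hDd0 6 n h6 (by decide)
      · exact hDd0 2 n h2 (by decide)
    · exact hDd0 1 n h1 (by decide)
  have hL : dEc V y u = ∑ T ∈ S ×ˢ (Finset.univ : Finset Bool),
      Om0/2 * frobI (DW V (triGrad y T)) (triGrad u T) := by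
    refine finsum_eq_sum_of_support_subset _ fun T hT => ?_
    simp only [Function.mem_support] at hT
    have hne : triGrad u T ≠ 0 := by
      intro h0; apply hT; rw [h0, frobI_zero_right, mul_zero]
    refine Finset.mem_coe.2 (Finset.mem_product.2 ⟨?_, Finset.mem_univ _⟩)
    exact htg T.1 T.2 (by rwa [show (T.1, T.2) = T from rfl])
  have hR : (∑ᶠ x : ℤ × ℤ, ∑ j : Fin 3,
        dotE (pd V (jlift j) (Famat (triGrad y (Txj x ((j : ℕ) + 1)))) +
              pd V (jlift j) (Famat (triGrad y (Txj x (j : ℕ)))))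
          (Dd ((j : ℕ) + 1) u x))
      = ∑ x ∈ S, ∑ j : Fin 3,
        dotE (pd V (jlift j) (Famat (triGrad y (Txj x ((j : ℕ) + 1)))) +
              pd V (jlift j) (Famat (triGrad y (Txj x (j : ℕ)))))
          (Dd ((j : ℕ) + 1) u x) := by
    refine finsum_eq_sum_of_support_subset _ fun x hx => ?_
    simp only [Function.mem_support] at hx
    obtain ⟨j, -, hj⟩ := Finset.exists_ne_zero_of_sum_ne_zero hx
    have hd : Dd ((j : ℕ) + 1) u x ≠ 0 := fun h0 => hj (by rw [h0, dotE_zero_right])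
    revert hd
    fin_cases j <;> exact fun hd => hDd0 _ x hd (by decide)
  rw [hL, hR, Finset.sum_product]
  have hA : (∑ n ∈ S, dotE (pd V 2 (Famat (triGrad y (n,true)))) (Dd 3 u (n + (1,0))))
      = ∑ x ∈ S, dotE (pd V 2 (Famat (triGrad y (x + (-1,0), true)))) (Dd 3 u x) := by
    have hs := sum_shift (f := fun x => dotE (pd V 2 (Famat (triGrad y (x + (-1,0), true))))
      (Dd 3 u x)) (S := S) ((1,0)) ?_
    · rw [← hs]
      refine Finset.sum_congr rfl fun n _ => ?_
      rw [show n + (1,0) + (-1,0) = n by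
        rw [add_assoc, show ((1,0) : ℤ×ℤ) + (-1,0) = 0 by decide, add_zero]]
    · intro x hx
      have hd : Dd 3 u x ≠ 0 := fun h0 => hx (by simp only [h0, dotE_zero_right])
      constructor
      · exact hDd0 3 x hd (by decide)
      · rw [show x - ((1,0) : ℤ×ℤ) = x + (-1,0) by
          rw [sub_eq_add_neg, show -((1,0):ℤ×ℤ) = (-1,0) by decide]]
        refine hDdS 3 ((1,0)) (x + (-1,0)) ?_ (by decide) (by decide)
        rwa [add_assoc, show ((-1,0) : ℤ×ℤ) + (1,0) = 0 by decide, add_zero]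
  have hB : (∑ n ∈ S, dotE (pd V 1 (Famat (triGrad y (n,false)))) (Dd 2 u (n + (1,-1))))
      = ∑ x ∈ S, dotE (pd V 1 (Famat (triGrad y (x + (-1,1), false)))) (Dd 2 u x) := by
    have hs := sum_shift (f := fun x => dotE (pd V 1 (Famat (triGrad y (x + (-1,1), false))))
      (Dd 2 u x)) (S := S) ((1,-1)) ?_
    · rw [← hs]
      refine Finset.sum_congr rfl fun n _ => ?_
      rw [show n + (1,-1) + (-1,1) = n by
        rw [add_assoc, show ((1,-1) : ℤ×ℤ) + (-1,1) = 0 by decide, add_zero]]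
    · intro x hx
      have hd : Dd 2 u x ≠ 0 := fun h0 => hx (by simp only [h0, dotE_zero_right])
      constructor
      · exact hDd0 2 x hd (by decide)
      · rw [show x - ((1,-1) : ℤ×ℤ) = x + (-1,1) by
          rw [sub_eq_add_neg, show -((1,-1):ℤ×ℤ) = (-1,1) by decide]]
        refine hDdS 2 ((1,-1)) (x + (-1,1)) ?_ (by decide) (by decide)
        rwa [add_assoc, show ((-1,1) : ℤ×ℤ) + (1,-1) = 0 by decide, add_zero]
  have hC : (∑ n ∈ S, dotE (pd V 2 (Famat (triGrad y (n,false)))) (Dd 3 u (n + (1,-1))))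
      = ∑ x ∈ S, dotE (pd V 2 (Famat (triGrad y (x + (-1,1), false)))) (Dd 3 u x) := by
    have hs := sum_shift (f := fun x => dotE (pd V 2 (Famat (triGrad y (x + (-1,1), false))))
      (Dd 3 u x)) (S := S) ((1,-1)) ?_
    · rw [← hs]
      refine Finset.sum_congr rfl fun n _ => ?_
      rw [show n + (1,-1) + (-1,1) = n by
        rw [add_assoc, show ((1,-1) : ℤ×ℤ) + (-1,1) = 0 by decide, add_zero]]
    · intro x hx
      have hd : Dd 3 u x ≠ 0 := fun h0 => hx (by simp only [h0, dotE_zero_right])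
      constructor
      · exact hDd0 3 x hd (by decide)
      · rw [show x - ((1,-1) : ℤ×ℤ) = x + (-1,1) by
          rw [sub_eq_add_neg, show -((1,-1):ℤ×ℤ) = (-1,1) by decide]]
        refine hDdS 3 ((1,-1)) (x + (-1,1)) ?_ (by decide) (by decide)
        rwa [add_assoc, show ((-1,1) : ℤ×ℤ) + (1,-1) = 0 by decide, add_zero]
  calc ∑ n ∈ S, ∑ b : Bool, Om0/2 * frobI (DW V (triGrad y (n,b))) (triGrad u (n,b))
      = ∑ n ∈ S, (dotE (pd V 0 (Famat (triGrad y (n,true)))) (Dd 1 u n)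
        + dotE (pd V 1 (Famat (triGrad y (n,true)))) (Dd 2 u n)
        + dotE (pd V 2 (Famat (triGrad y (n,true)))) (Dd 3 u (n + (1,0)))
        + (dotE (pd V 0 (Famat (triGrad y (n,false)))) (Dd 1 u n)
        + dotE (pd V 1 (Famat (triGrad y (n,false)))) (Dd 2 u (n + (1,-1)))
        + dotE (pd V 2 (Famat (triGrad y (n,false)))) (Dd 3 u (n + (1,-1))))) := by
        refine Finset.sum_congr rfl fun n _ => ?_
        rw [Fintype.sum_bool, f_up V hV, f_dn V hV]
    _ = ∑ x ∈ S, ∑ j : Fin 3,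
        dotE (pd V (jlift j) (Famat (triGrad y (Txj x ((j : ℕ) + 1)))) +
              pd V (jlift j) (Famat (triGrad y (Txj x (j : ℕ)))))
          (Dd ((j : ℕ) + 1) u x) := by
        simp only [Fin.sum_univ_three, jlift0, jlift1, jlift2, cast0, cast1, cast2,
          castz0, castz1, castz2, z01, z11, z21, Txj_0, Txj_1, Txj_2, Txj_3, dotE_add_left,
          Finset.sum_add_distrib]
        linear_combination hA + hB + hC


end AC
open AC in
/-- edge representations of the first variations `δE_c` and `δE_a`
(Lemma 4.1). -/
theorem edge_representations
    (V : (Fin 6 → E2) → ℝ) (hV : memV V) (hV0 : V aFam = 0)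
    (y : ℤ × ℤ → E2) (hy : inY0 y) (u : ℤ × ℤ → E2) (hu : FinSupp u) :
    dEc V y u = (∑ᶠ x : ℤ × ℤ, ∑ j : Fin 3,
        dotE (pd V (jlift j) (Famat (triGrad y (Txj x ((j : ℕ) + 1)))) +
              pd V (jlift j) (Famat (triGrad y (Txj x (j : ℕ)))))
          (Dd ((j : ℕ) + 1) u x)) ∧
    dEa V y u = (∑ᶠ x : ℤ × ℤ, ∑ j : Fin 3,
        dotE (pd V (jlift j) (Dfam y x) -
              pd V (jlift j + 3) (Dfam y (x + ed ((j : ℕ) + 1))))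
          (Dd ((j : ℕ) + 1) u x)) :=
  ⟨cb_rep V hV y u hu, atom_rep V y u hu⟩
end
end

section
/- A piecewise constant tensor field σ : 𝒯 → ℝ^{2×2} is divergence free, i.e. Σ_{T∈𝒯} |T| σ(T) : ∂_T u = 0 for all u ∈ 𝒰₀, if and only if there exists ψ ∈ N1(𝒯)² such that σ(T) = (∂_T ψ) J for all T ∈ 𝒯, where J is the rotation of ℝ² by π/2. -/
open Real
open scoped BigOperators Classical ENNReal

noncomputable section

namespace ACP
open AC

lemma avec_c (j : ℤ) : avec j 0 = Real.cos (((j : ℝ) - 1) * (π / 3)) := rfl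
lemma avec_s (j : ℤ) : avec j 1 = Real.sin (((j : ℝ) - 1) * (π / 3)) := rfl

lemma av1_0 : avec 1 0 = 1 := by rw [avec_c]; norm_num
lemma av1_1 : avec 1 1 = 0 := by rw [avec_s]; norm_num
lemma av2_0 : avec 2 0 = 1/2 := by
  rw [avec_c, show (((2:ℤ):ℝ) - 1) * (π/3) = π/3 by push_cast; ring, Real.cos_pi_div_three]
lemma av2_1 : avec 2 1 = Real.sqrt 3/2 := by
  rw [avec_s, show (((2:ℤ):ℝ) - 1) * (π/3) = π/3 by push_cast; ring, Real.sin_pi_div_three]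
lemma av3_0 : avec 3 0 = -(1/2) := by
  rw [avec_c, show (((3:ℤ):ℝ) - 1) * (π/3) = π - π/3 by push_cast; ring, Real.cos_pi_sub,
    Real.cos_pi_div_three]
lemma av3_1 : avec 3 1 = Real.sqrt 3/2 := by
  rw [avec_s, show (((3:ℤ):ℝ) - 1) * (π/3) = π - π/3 by push_cast; ring, Real.sin_pi_sub,
    Real.sin_pi_div_three]
lemma av4_0 : avec 4 0 = -1 := by
  rw [avec_c, show (((4:ℤ):ℝ) - 1) * (π/3) = π by push_cast; ring, Real.cos_pi]
lemma av4_1 : avec 4 1 = 0 := by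
  rw [avec_s, show (((4:ℤ):ℝ) - 1) * (π/3) = π by push_cast; ring, Real.sin_pi]
lemma av5_0 : avec 5 0 = -(1/2) := by
  rw [avec_c, show (((5:ℤ):ℝ) - 1) * (π/3) = π + π/3 by push_cast; ring, Real.cos_add,
    Real.cos_pi, Real.sin_pi, Real.cos_pi_div_three]; ring
lemma av5_1 : avec 5 1 = -(Real.sqrt 3/2) := by
  rw [avec_s, show (((5:ℤ):ℝ) - 1) * (π/3) = π + π/3 by push_cast; ring, Real.sin_add,
    Real.cos_pi, Real.sin_pi, Real.sin_pi_div_three]; ring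
lemma av6_0 : avec 6 0 = 1/2 := by
  rw [avec_c, show (((6:ℤ):ℝ) - 1) * (π/3) = π + (π - π/3) by push_cast; ring, Real.cos_add,
    Real.cos_pi, Real.sin_pi, Real.cos_pi_sub, Real.cos_pi_div_three]; ring
lemma av6_1 : avec 6 1 = -(Real.sqrt 3/2) := by
  rw [avec_s, show (((6:ℤ):ℝ) - 1) * (π/3) = π + (π - π/3) by push_cast; ring, Real.sin_add,
    Real.cos_pi, Real.sin_pi, Real.sin_pi_sub, Real.sin_pi_div_three]; ring
lemma av0_0 : avec 0 0 = 1/2 := by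
  rw [avec_c, show (((0:ℤ):ℝ) - 1) * (π/3) = -(π/3) by push_cast; ring, Real.cos_neg,
    Real.cos_pi_div_three]
lemma av0_1 : avec 0 1 = -(Real.sqrt 3/2) := by
  rw [avec_s, show (((0:ℤ):ℝ) - 1) * (π/3) = -(π/3) by push_cast; ring, Real.sin_neg,
    Real.sin_pi_div_three]

lemma avec_period (j : ℤ) : avec j = avec (j % 6) := by
  ext i
  have key : ∀ f : ℝ → ℝ, (∀ x : ℝ, ∀ n : ℤ, f (x + n * (2 * π)) = f x) →
      f (((j : ℝ) - 1) * (π / 3)) = f ((((j % 6 : ℤ) : ℝ) - 1) * (π / 3)) := by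
    intro f hf
    have hj : ((j : ℝ) - 1) * (π / 3)
        = (((j % 6 : ℤ) : ℝ) - 1) * (π / 3) + (j / 6 : ℤ) * (2 * π) := by
      have := Int.emod_add_mul_ediv j 6
      have hcast : (j : ℝ) = ((j % 6 : ℤ) : ℝ) + 6 * ((j / 6 : ℤ) : ℝ) := by
        have h2 : ((j % 6 + 6 * (j / 6) : ℤ) : ℝ) = (j : ℝ) := by exact_mod_cast congrArg (Int.cast : ℤ → ℝ) this
        push_cast at h2
        linarith
      rw [hcast]; ring
    rw [hj, hf]
  fin_cases i
  · exact key Real.cos (fun x n => Real.cos_add_int_mul_two_pi x n)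
  · exact key Real.sin (fun x n => Real.sin_add_int_mul_two_pi x n)

lemma emb_0 (n : ℤ × ℤ) : emb n 0 = (n.1:ℝ) + (n.2:ℝ)/2 := by
  simp [emb, PiLp.add_apply, PiLp.smul_apply, av1_0, av2_0]; ring
lemma emb_1 (n : ℤ × ℤ) : emb n 1 = (n.2:ℝ) * (Real.sqrt 3/2) := by
  simp [emb, PiLp.add_apply, PiLp.smul_apply, av1_1, av2_1]

lemma Txj_0 (x : ℤ × ℤ) : Txj x 0 = (x, false) := rfl
lemma Txj_1 (x : ℤ × ℤ) : Txj x 1 = (x, true) := rfl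
lemma Txj_2 (x : ℤ × ℤ) : Txj x 2 = (x + (-1, 1), false) := rfl
lemma Txj_3 (x : ℤ × ℤ) : Txj x 3 = (x + (-1, 0), true) := rfl
lemma Txj_4 (x : ℤ × ℤ) : Txj x 4 = (x + (-1, 0), false) := rfl
lemma Txj_5 (x : ℤ × ℤ) : Txj x 5 = (x + (0, -1), true) := rfl
lemma Txj_neg1 (x : ℤ × ℤ) : Txj x (-1) = (x + (0, -1), true) := rfl
lemma Txj_mod (x : ℤ × ℤ) (j : ℤ) : Txj x j = Txj x (j % 6) := by
  unfold Txj; rw [Int.emod_emod_of_dvd _ (dvd_refl 6)]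



/-- `G = -(σ J)` entrywise. -/
def Gf (σ : Tri → Mat2) (T : Tri) : Mat2 := fun i k => if k = 0 then -σ T i 1 else σ T i 0

lemma Gf_mul_J (σ : Tri → Mat2) (T : Tri) : Gf σ T * Jmat = σ T := by
  ext i k
  rw [Matrix.mul_apply, Fin.sum_univ_two]
  fin_cases k <;>
    simp [Gf, Jmat, Matrix.cons_val_zero, Matrix.cons_val_one, Matrix.head_cons]

lemma Gf_eq (σ : Tri → Mat2) (G : Tri → Mat2) (h : ∀ T, σ T = G T * Jmat) (T : Tri) :
    Gf σ T = G T := by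
  ext i k
  have h0 : σ T i 0 = G T i 1 := by
    rw [h]; rw [Matrix.mul_apply, Fin.sum_univ_two]
    simp [Jmat, Matrix.cons_val_zero, Matrix.cons_val_one, Matrix.head_cons]
  have h1 : σ T i 1 = -G T i 0 := by
    rw [h]; rw [Matrix.mul_apply, Fin.sum_univ_two]
    simp [Jmat, Matrix.cons_val_zero, Matrix.cons_val_one, Matrix.head_cons]
  fin_cases k <;> simp [Gf, h0, h1]

/-- jump of the candidate `ψ` across the edge `(x, x+a_j)`. -/
def jmpv (σ : Tri → Mat2) (x : ℤ × ℤ) (j : ℤ) : E2 :=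
  mvec (Gf σ (Txj x (j - 1)) - Gf σ (Txj x j)) (edgeMid x j)

/-- weights for the `a₁`-difference term of a triangle. -/
def wA (σ : Tri → Mat2) (T : Tri) (i : Fin 2) : ℝ :=
  if T.2 then Real.sqrt 3/4 * σ T i 0 - 1/4 * σ T i 1
  else Real.sqrt 3/4 * σ T i 0 + 1/4 * σ T i 1

/-- weights for the second difference term. -/
def wB (σ : Tri → Mat2) (T : Tri) (i : Fin 2) : ℝ :=
  if T.2 then 1/2 * σ T i 1 else -(1/2) * σ T i 1

def shB (b : Bool) : ℤ × ℤ := if b then (0, 1) else (1, -1)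

/-- divergence of `σ` at the vertex `x`. -/
def dvg (σ : Tri → Mat2) (x : ℤ × ℤ) (i : Fin 2) : ℝ :=
  (wA σ (x - (1, 0), true) i + wA σ (x - (1, 0), false) i)
    + wB σ (x - (0, 1), true) i + wB σ (x - (1, -1), false) i
    - (wA σ (x, true) i + wB σ (x, true) i + wA σ (x, false) i + wB σ (x, false) i)

lemma sqrt3_pos : (0:ℝ) < Real.sqrt 3 := by positivity
lemma sqrt3_sq : Real.sqrt 3 * Real.sqrt 3 = 3 := Real.mul_self_sqrt (by norm_num)

lemma ed_1 : ed 1 = (1, 0) := rfl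
lemma ed_2 : ed 2 = (0, 1) := rfl
lemma ed_6 : ed 6 = (1, -1) := rfl

/-- pointwise identity: triangle contribution in terms of vertex differences. -/
lemma contrib (σ : Tri → Mat2) (u : ℤ × ℤ → E2) (T : Tri) :
    Om0 / 2 * frobI (σ T) (triGrad u T) =
      (∑ i, wA σ T i * (u (T.1 + (1, 0)) i - u T.1 i))
        + ∑ i, wB σ T i * (u (T.1 + shB T.2) i - u T.1 i) := by
  obtain ⟨n, b⟩ := T
  have h3 := sqrt3_sq
  have h3ne : Real.sqrt 3 ≠ 0 := ne_of_gt sqrt3_pos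
  cases b <;>
  · simp only [triGrad, solve2, frobI, Dd, ed_1, ed_2, ed_6, wA, wB, shB, Om0,
      Fin.sum_univ_two, PiLp.sub_apply, av1_0, av1_1, av2_0, av2_1, av6_0, av6_1,
      if_true, if_false, Bool.false_eq_true, ite_true, ite_false]
    norm_num
    field_simp
    ring


lemma jmpv_apply (σ : Tri → Mat2) (x : ℤ × ℤ) (j : ℤ) (i : Fin 2) :
    jmpv σ x j i =
      ∑ k, (Gf σ (Txj x (j - 1)) i k - Gf σ (Txj x j) i k) * (emb x k + 1/2 * avec j k) := by
  simp [jmpv, mvec, toE2, edgeMid, Matrix.sub_apply, PiLp.add_apply, PiLp.smul_apply,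
    smul_eq_mul]

/-- the sum of the six jumps around the vertex `x` is `-dvg σ x`. -/
lemma loop_eq (σ : Tri → Mat2) (x : ℤ × ℤ) (i : Fin 2) :
    jmpv σ x 0 i + jmpv σ x 1 i + jmpv σ x 2 i + jmpv σ x 3 i + jmpv σ x 4 i +
      jmpv σ x 5 i = -dvg σ x i := by
  obtain ⟨x1, x2⟩ := x
  simp only [jmpv_apply, Fin.sum_univ_two, dvg, wA, wB, Gf,
    show (0:ℤ) - 1 = -1 by norm_num, show (1:ℤ) - 1 = 0 by norm_num,
    show (2:ℤ) - 1 = 1 by norm_num, show (3:ℤ) - 1 = 2 by norm_num,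
    show (4:ℤ) - 1 = 3 by norm_num, show (5:ℤ) - 1 = 4 by norm_num,
    Txj_0, Txj_1, Txj_2, Txj_3, Txj_4, Txj_5, Txj_neg1,
    av0_0, av0_1, av1_0, av1_1, av2_0, av2_1, av3_0, av3_1, av4_0, av4_1, av5_0, av5_1,
    emb_0, emb_1, Prod.mk_add_mk, Prod.mk_sub_mk,
    if_true, if_false, ite_true, ite_false]
  norm_num
  ring_nf

def Pj (σ : Tri → Mat2) (n : ℤ × ℤ) : E2 := jmpv σ n 2 + jmpv σ (n + (-1, 1)) 1
def Qj (σ : Tri → Mat2) (n : ℤ × ℤ) : E2 := jmpv σ (n + (1, -1)) 3 - jmpv σ n 1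

lemma compat_eq (σ : Tri → Mat2) (n : ℤ × ℤ) (i : Fin 2) :
    Pj σ n i + Qj σ (n + (-1, 1)) i - (Qj σ n i + Pj σ (n + (0, -1)) i) = -dvg σ n i := by
  obtain ⟨x1, x2⟩ := n
  simp only [Pj, Qj, PiLp.add_apply, PiLp.sub_apply, jmpv_apply, Fin.sum_univ_two, dvg, wA, wB,
    Gf, show (1:ℤ) - 1 = 0 by norm_num,
    show (2:ℤ) - 1 = 1 by norm_num, show (3:ℤ) - 1 = 2 by norm_num,
    Txj_0, Txj_1, Txj_2, Txj_3,
    av1_0, av1_1, av2_0, av2_1, av3_0, av3_1,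
    emb_0, emb_1, Prod.mk_add_mk, Prod.mk_sub_mk,
    if_true, if_false, ite_true, ite_false]
  norm_num
  ring_nf

/-- one-dimensional discrete antiderivative. -/
lemma zsum_ex (h : ℤ → E2) : ∃ g : ℤ → E2, g 0 = 0 ∧ ∀ k : ℤ, g (k + 1) = g k + h k := by
  refine ⟨fun k => (∑ i ∈ Finset.range k.toNat, h i) - ∑ i ∈ Finset.range (-k).toNat, h (-(i + 1)),
    by simp, fun k => ?_⟩
  dsimp only
  rcases le_or_gt 0 k with hk | hk
  · have h1 : (k + 1).toNat = k.toNat + 1 := by omega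
    have h2 : (-k).toNat = 0 := by omega
    have h3 : (-(k + 1)).toNat = 0 := by omega
    have h4 : ((k.toNat : ℤ)) = k := by omega
    rw [h1, h2, h3, Finset.sum_range_succ, h4]
    simp only [Finset.sum_range_zero]
    abel
  · have h1 : (k + 1).toNat = 0 := by omega
    have h2 : k.toNat = 0 := by omega
    have h3 : (-k).toNat = (-(k + 1)).toNat + 1 := by omega
    rw [h1, h2, h3, Finset.sum_range_succ]
    have h4 : (-((((-(k + 1)).toNat : ℤ)) + 1)) = k := by omega
    rw [h4]
    simp only [Finset.sum_range_zero]
    abel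

/-- two antiderivatives with the same increments and value at `0` agree. -/
lemma zdiff_ext (F G : ℤ → E2) (h0 : F 0 = G 0)
    (hd : ∀ k : ℤ, F (k + 1) - F k = G (k + 1) - G k) : ∀ k : ℤ, F k = G k := by
  intro k
  induction k using Int.induction_on with
  | zero => exact h0
  | succ n ih => linear_combination (norm := abel) hd n + ih
  | pred n ih =>
      have h := hd (-n - 1)
      rw [show (-(n:ℤ) - 1 + 1) = -n by ring] at h
      linear_combination (norm := abel) ih - h

/-- standard grid antiderivative on `ℤ²`. -/
lemma grid_ex (P Q : ℤ × ℤ → E2)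
    (hc : ∀ n : ℤ × ℤ, P n + Q (n + (1, 0)) = Q n + P (n + (0, 1))) :
    ∃ f : ℤ × ℤ → E2, (∀ n, f (n + (1, 0)) - f n = P n) ∧ (∀ n, f (n + (0, 1)) - f n = Q n) := by
  obtain ⟨g0, hg00, hg0⟩ := zsum_ex fun α => P (α, 0)
  have hQ := fun α : ℤ => zsum_ex fun β => Q (α, β)
  choose gQ hgQ0 hgQ using hQ
  refine ⟨fun n => g0 n.1 + gQ n.1 n.2, fun n => ?_, fun n => ?_⟩
  · obtain ⟨α, β⟩ := n
    simp only [Prod.mk_add_mk, add_zero]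
    have key : ∀ β : ℤ, gQ (α + 1) β - gQ α β = P (α, β) - P (α, 0) := by
      refine zdiff_ext _ _ (by rw [hgQ0, hgQ0]; simp) fun k => ?_
      have h1 := hgQ (α + 1) k
      have h2 := hgQ α k
      have h3 := hc (α, k)
      simp only [Prod.mk_add_mk, add_zero] at h3
      rw [h1, h2]
      linear_combination (norm := abel) h3
    have hk := key β
    have hg := hg0 α
    linear_combination (norm := abel) hk + hg
  · obtain ⟨α, β⟩ := n
    simp only [Prod.mk_add_mk, add_zero]
    have := hgQ α β
    linear_combination (norm := abel) this

/-- skew grid antiderivative: steps `(-1,1)` and `(0,-1)`. -/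
lemma skew_ex (P Q : ℤ × ℤ → E2)
    (hc : ∀ n : ℤ × ℤ, P n + Q (n + (-1, 1)) = Q n + P (n + (0, -1))) :
    ∃ f : ℤ × ℤ → E2, (∀ n, f (n + (-1, 1)) - f n = P n) ∧ (∀ n, f (n + (0, -1)) - f n = Q n) := by
  have hc' : ∀ n : ℤ × ℤ, (fun m => P (-m.1, m.1 - m.2)) n
      + (fun m => Q (-m.1, m.1 - m.2)) (n + (1, 0))
      = (fun m => Q (-m.1, m.1 - m.2)) n + (fun m => P (-m.1, m.1 - m.2)) (n + (0, 1)) := by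
    rintro ⟨a, b⟩
    have h := hc (-a, a - b)
    simp only [Prod.mk_add_mk] at h ⊢
    rw [show ((-(a + 1) : ℤ), ((a + 1) - (b + 0) : ℤ)) = ((-a + -1 : ℤ), (a - b + 1 : ℤ))
      by rw [Prod.mk.injEq]; omega]
    rw [show ((-(a + 0) : ℤ), ((a + 0) - (b + 1) : ℤ)) = ((-a + 0 : ℤ), (a - b + -1 : ℤ))
      by rw [Prod.mk.injEq]; omega]
    exact h
  obtain ⟨f', h1, h2⟩ := grid_ex (fun m => P (-m.1, m.1 - m.2)) (fun m => Q (-m.1, m.1 - m.2)) hc'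
  refine ⟨fun n => f' (-n.1, -n.1 - n.2), fun n => ?_, fun n => ?_⟩
  · obtain ⟨a, b⟩ := n
    have h := h1 (-a, -a - b)
    simp only [Prod.mk_add_mk] at h ⊢
    rw [show ((-a + 1 : ℤ), (-a - b + 0 : ℤ)) = ((-(a + -1) : ℤ), (-(a + -1) - (b + 1) : ℤ))
      by rw [Prod.mk.injEq]; omega] at h
    rw [show ((- -a : ℤ), (-a - (-a - b) : ℤ)) = ((a : ℤ), (b : ℤ))
      by rw [Prod.mk.injEq]; omega] at h
    exact h
  · obtain ⟨a, b⟩ := n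
    have h := h2 (-a, -a - b)
    simp only [Prod.mk_add_mk] at h ⊢
    rw [show ((-a + 0 : ℤ), (-a - b + 1 : ℤ)) = ((-(a + 0) : ℤ), (-(a + 0) - (b + -1) : ℤ))
      by rw [Prod.mk.injEq]; omega] at h
    rw [show ((- -a : ℤ), (-a - (-a - b) : ℤ)) = ((a : ℤ), (b : ℤ))
      by rw [Prod.mk.injEq]; omega] at h
    exact h

lemma mvec_sub_vec (F : Mat2) (z w : E2) : mvec F (z - w) = mvec F z - mvec F w := by
  ext i
  simp only [mvec, toE2, PiLp.toLp_apply, PiLp.sub_apply, Fin.sum_univ_two]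
  ring

lemma mvec_sub_mat (F1 F2 : Mat2) (v : E2) : mvec (F1 - F2) v = mvec F1 v - mvec F2 v := by
  ext i
  simp only [mvec, toE2, PiLp.toLp_apply, PiLp.sub_apply, Matrix.sub_apply, Fin.sum_univ_two]
  ring

/-- summation by parts: the variation equals the sum of vertex divergences. -/
lemma key (σ : Tri → Mat2) (u : ℤ × ℤ → E2) (hu : FinSupp u) :
    ∑ᶠ T : Tri, Om0 / 2 * frobI (σ T) (triGrad u T)
      = ∑ᶠ x : ℤ × ℤ, ∑ i, dvg σ x i * u x i := by
  classical
  set s : Finset (ℤ × ℤ) := hu.toFinset with hs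
  have hzero : ∀ x, x ∉ s → u x = 0 := by
    intro x hx
    by_contra h
    exact hx (by rw [hs]; exact (Set.Finite.mem_toFinset (s := Function.support u) hu).2 h)
  have hzero' : ∀ x (i : Fin 2), x ∉ s → u x i = 0 := fun x i hx => by rw [hzero x hx]; rfl
  set B : Finset (ℤ × ℤ) := ((s ∪ s.image (· - ((1:ℤ), (0:ℤ)))) ∪ s.image (· - ((0:ℤ), (1:ℤ))))
      ∪ s.image (· - ((1:ℤ), (-1:ℤ))) with hB
  have hsB : s ⊆ B := by
    intro x hx
    simp only [hB, Finset.mem_union]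
    tauto
  have h10 : ∀ n : ℤ × ℤ, n + (1, 0) ∈ s → n ∈ B := by
    intro n hn
    simp only [hB, Finset.mem_union, Finset.mem_image]
    exact Or.inl (Or.inl (Or.inr ⟨n + (1, 0), hn, by abel⟩))
  have h01 : ∀ n : ℤ × ℤ, n + (0, 1) ∈ s → n ∈ B := by
    intro n hn
    simp only [hB, Finset.mem_union, Finset.mem_image]
    exact Or.inl (Or.inr ⟨n + (0, 1), hn, by abel⟩)
  have h1m1 : ∀ n : ℤ × ℤ, n + (1, -1) ∈ s → n ∈ B := by
    intro n hn
    simp only [hB, Finset.mem_union, Finset.mem_image]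
    exact Or.inr ⟨n + (1, -1), hn, by abel⟩
  have hsupp : (Function.support fun T : Tri => Om0 / 2 * frobI (σ T) (triGrad u T))
      ⊆ ↑(B ×ˢ (Finset.univ : Finset Bool)) := by
    intro T hT
    simp only [Function.mem_support] at hT
    simp only [Finset.coe_product, Set.mem_prod, Finset.mem_coe, Finset.mem_univ, and_true]
    by_contra hTB
    apply hT
    rw [contrib]
    have hu1 : ∀ i : Fin 2, u T.1 i = 0 := fun i => hzero' _ i (fun h => hTB (hsB h))
    have hu2 : ∀ i : Fin 2, u (T.1 + (1, 0)) i = 0 := fun i =>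
      hzero' _ i (fun h => hTB (h10 _ h))
    have hu3 : ∀ i : Fin 2, u (T.1 + shB T.2) i = 0 := by
      intro i
      cases hb : T.2 <;> simp only [shB, hb, if_true, if_false, ite_true, ite_false] <;>
        [exact hzero' _ i (fun h => hTB (h1m1 _ h));
         exact hzero' _ i (fun h => hTB (h01 _ h))]
    simp [hu1, hu2, hu3]
  rw [finsum_eq_finset_sum_of_support_subset _ hsupp]
  have hsupp2 : (Function.support fun x => ∑ i, dvg σ x i * u x i) ⊆ ↑s := by
    intro x hx
    simp only [Function.mem_support] at hx
    by_contra hxs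
    exact hx (by simp [fun i => hzero' x i hxs])
  rw [finsum_eq_finset_sum_of_support_subset _ hsupp2]
  rw [Finset.sum_product]
  have hbool : ∀ n : ℤ × ℤ, (∑ b : Bool, Om0 / 2 * frobI (σ (n, b)) (triGrad u (n, b)))
      = Om0 / 2 * frobI (σ (n, true)) (triGrad u (n, true))
        + Om0 / 2 * frobI (σ (n, false)) (triGrad u (n, false)) := by
    intro n
    rw [Fintype.sum_bool]
  have step1 : ∀ n : ℤ × ℤ,
      Om0 / 2 * frobI (σ (n, true)) (triGrad u (n, true))
        + Om0 / 2 * frobI (σ (n, false)) (triGrad u (n, false))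
      = (∑ i, (wA σ (n, true) i + wA σ (n, false) i) * u (n + (1, 0)) i)
        + ((∑ i, wB σ (n, true) i * u (n + (0, 1)) i)
        + ((∑ i, wB σ (n, false) i * u (n + (1, -1)) i)
        - (∑ i, (wA σ (n, true) i + wB σ (n, true) i + wA σ (n, false) i
            + wB σ (n, false) i) * u n i))) := by
    intro n
    rw [contrib, contrib]
    simp only [shB, Bool.false_eq_true, if_true, if_false, ite_true, ite_false,
      Fin.sum_univ_two]
    ring
  simp only [hbool, step1]
  rw [Finset.sum_add_distrib, Finset.sum_add_distrib, Finset.sum_sub_distrib]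
  have hshift_sum : ∀ (c : ℤ × ℤ → Fin 2 → ℝ) (v : ℤ × ℤ), (∀ n : ℤ × ℤ, n + v ∈ s → n ∈ B) →
      (∑ n ∈ B, ∑ i, c n i * u (n + v) i) = ∑ x ∈ s, ∑ i, c (x - v) i * u x i := by
    intro c v hv
    have hinj : ∀ x ∈ B, ∀ y ∈ B, x + v = y + v → x = y := fun x _ y _ h => by
      exact add_right_cancel h
    have himg : ∑ x ∈ B.image (· + v), (∑ i, c (x - v) i * u x i)
        = ∑ n ∈ B, ∑ i, c (n + v - v) i * u (n + v) i := Finset.sum_image hinj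
    have hsub : s ⊆ B.image (· + v) := by
      intro x hx
      refine Finset.mem_image.2 ⟨x - v, hv (x - v) (by rw [sub_add_cancel]; exact hx),
        sub_add_cancel x v⟩
    have hvanish : ∀ x ∈ B.image (· + v), x ∉ s → (∑ i, c (x - v) i * u x i) = 0 := by
      intro x _ hx
      simp [fun i => hzero' x i hx]
    calc ∑ n ∈ B, ∑ i, c n i * u (n + v) i
        = ∑ n ∈ B, ∑ i, c (n + v - v) i * u (n + v) i := by
          refine Finset.sum_congr rfl fun n _ => ?_
          rw [add_sub_cancel_right]
      _ = ∑ x ∈ B.image (· + v), ∑ i, c (x - v) i * u x i := himg.symm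
      _ = ∑ x ∈ s, ∑ i, c (x - v) i * u x i := (Finset.sum_subset hsub hvanish).symm
  have hbase : ∀ c : ℤ × ℤ → Fin 2 → ℝ,
      (∑ n ∈ B, ∑ i, c n i * u n i) = ∑ x ∈ s, ∑ i, c x i * u x i := by
    intro c
    exact (Finset.sum_subset hsB (fun x _ hx => by simp [fun i => hzero' x i hx])).symm
  rw [hshift_sum (fun n i => wA σ (n, true) i + wA σ (n, false) i) (1, 0) h10,
      hshift_sum (fun n i => wB σ (n, true) i) (0, 1) h01,
      hshift_sum (fun n i => wB σ (n, false) i) (1, -1) h1m1,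
      hbase (fun n i => wA σ (n, true) i + wB σ (n, true) i + wA σ (n, false) i
        + wB σ (n, false) i)]
  rw [← Finset.sum_sub_distrib, ← Finset.sum_add_distrib, ← Finset.sum_add_distrib]
  refine Finset.sum_congr rfl fun x _ => ?_
  simp only [dvg, Fin.sum_univ_two]
  ring

lemma flip1 (σ : Tri → Mat2) (x : ℤ × ℤ) : jmpv σ x 4 = -jmpv σ (x + (-1, 0)) 1 := by
  ext i
  obtain ⟨a, b⟩ := x
  simp only [PiLp.neg_apply, jmpv_apply, Fin.sum_univ_two, Gf,
    show (4:ℤ) - 1 = 3 by norm_num, show (1:ℤ) - 1 = 0 by norm_num,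
    Txj_0, Txj_1, Txj_3, Txj_4, av4_0, av4_1, av1_0, av1_1,
    emb_0, emb_1, Prod.mk_add_mk, if_true, if_false, ite_true, ite_false]
  push_cast
  ring_nf

lemma flip2 (σ : Tri → Mat2) (x : ℤ × ℤ) : jmpv σ x 5 = -jmpv σ (x + (0, -1)) 2 := by
  ext i
  obtain ⟨a, b⟩ := x
  simp only [PiLp.neg_apply, jmpv_apply, Fin.sum_univ_two, Gf,
    show (5:ℤ) - 1 = 4 by norm_num, show (2:ℤ) - 1 = 1 by norm_num,
    Txj_1, Txj_2, Txj_4, Txj_5, av5_0, av5_1, av2_0, av2_1,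
    emb_0, emb_1, Prod.mk_add_mk, if_true, if_false, ite_true, ite_false]
  push_cast
  ring_nf

lemma flip3 (σ : Tri → Mat2) (x : ℤ × ℤ) : jmpv σ x 0 = -jmpv σ (x + (1, -1)) 3 := by
  ext i
  obtain ⟨a, b⟩ := x
  simp only [PiLp.neg_apply, jmpv_apply, Fin.sum_univ_two, Gf,
    show (0:ℤ) - 1 = -1 by norm_num, show (3:ℤ) - 1 = 2 by norm_num,
    Txj_0, Txj_neg1, Txj_2, Txj_3, av0_0, av0_1, av3_0, av3_1,
    emb_0, emb_1, Prod.mk_add_mk, if_true, if_false, ite_true, ite_false]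
  push_cast
  ring_nf

lemma dvg_zero (σ : Tri → Mat2)
    (H : ∀ u : ℤ × ℤ → E2, FinSupp u →
      ∑ᶠ T : Tri, Om0 / 2 * frobI (σ T) (triGrad u T) = 0) :
    ∀ (x : ℤ × ℤ) (i : Fin 2), dvg σ x i = 0 := by
  intro x k
  classical
  set u : ℤ × ℤ → E2 := fun n => if n = x then toE2 (Pi.single k 1) else 0 with hu
  have hfs : FinSupp u := by
    apply Set.Finite.subset (Set.finite_singleton x)
    intro n hn
    simp only [Function.mem_support, hu] at hn
    by_contra h
    simp only [Set.mem_singleton_iff] at h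
    exact hn (if_neg h)
  have h := H u hfs
  rw [key σ u hfs] at h
  rw [finsum_eq_single _ x (fun b hb => by simp [hu, hb])] at h
  simp only [hu, if_pos rfl, toE2, Pi.single_apply, mul_ite, mul_one, mul_zero,
    Finset.sum_ite_eq', Finset.mem_univ, if_true] at h
  exact h

theorem main_thm (σ : Tri → Mat2) :
    (∀ u : ℤ × ℤ → E2, FinSupp u →
        ∑ᶠ T : Tri, Om0 / 2 * frobI (σ T) (triGrad u T) = 0) ↔
      ∃ (ψ : Tri → E2 → E2) (G : Tri → Mat2),
        affWith ψ G ∧ midCont ψ ∧ ∀ T : Tri, σ T = G T * Jmat := by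
  classical
  constructor
  · intro H
    have hd : ∀ (x : ℤ × ℤ) (i : Fin 2), dvg σ x i = 0 := dvg_zero σ H
    have hcomp : ∀ n : ℤ × ℤ, Pj σ n + Qj σ (n + (-1, 1)) = Qj σ n + Pj σ (n + (0, -1)) := by
      intro n
      ext i
      have h1 := compat_eq σ n i
      rw [hd n i, neg_zero, sub_eq_zero] at h1
      show (Pj σ n + Qj σ (n + (-1, 1))) i = (Qj σ n + Pj σ (n + (0, -1))) i
      simpa [PiLp.add_apply] using h1
    obtain ⟨f, hf1, hf2⟩ := skew_ex (Pj σ) (Qj σ) hcomp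
    set c : Tri → E2 := fun T => if T.2 then f T.1 else f T.1 - jmpv σ T.1 1 with hc
    refine ⟨fun T z => mvec (Gf σ T) z + c T, Gf σ, ?_, ?_, fun T => (Gf_mul_J σ T).symm⟩
    · intro T z w
      dsimp only
      rw [mvec_sub_vec]
      abel
    · have hrel1 : ∀ y : ℤ × ℤ, c (y, true) - c (y, false) = jmpv σ y 1 := by
        intro y
        simp only [hc, Bool.false_eq_true, if_true, if_false, ite_true, ite_false]
        exact sub_sub_cancel _ _
      have hrel2 : ∀ y : ℤ × ℤ, c (y + (-1, 1), false) - c (y, true) = jmpv σ y 2 := by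
        intro y
        have h := hf1 y
        simp only [hc, Bool.false_eq_true, if_true, if_false, ite_true, ite_false]
        rw [sub_right_comm, h]
        simp only [Pj]
        abel
      have hrel3 : ∀ y : ℤ × ℤ, c (y + (-1, 0), true) - c (y + (-1, 1), false) = jmpv σ y 3 := by
        intro y
        have h := hf2 (y + (-1, 1))
        rw [add_assoc, show (((-1:ℤ), (1:ℤ)) + ((0:ℤ), (-1:ℤ))) = ((-1:ℤ), (0:ℤ)) by decide]
          at h
        simp only [Qj] at h
        rw [add_assoc, show (((-1:ℤ), (1:ℤ)) + ((1:ℤ), (-1:ℤ))) = (0 : ℤ × ℤ) by decide,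
          add_zero] at h
        simp only [hc, Bool.false_eq_true, if_true, if_false, ite_true, ite_false]
        have e : f (y + (-1, 0)) - (f (y + (-1, 1)) - jmpv σ (y + (-1, 1)) 1)
            = (f (y + (-1, 0)) - f (y + (-1, 1))) + jmpv σ (y + (-1, 1)) 1 := by abel
        rw [e, h]
        abel
      have hjump : ∀ (x : ℤ × ℤ) (j : ℤ), c (Txj x j) - c (Txj x (j - 1)) = jmpv σ x j := by
        intro x j
        have hTa : Txj x j = Txj x (j % 6) := Txj_mod x j
        have hTb : Txj x (j - 1) = Txj x (j % 6 - 1) := by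
          rw [Txj_mod x (j - 1), Txj_mod x (j % 6 - 1)]
          congr 1
          omega
        have hjm : jmpv σ x j = jmpv σ x (j % 6) := by
          simp only [jmpv, edgeMid]
          rw [hTa, hTb, avec_period]
        rw [hTa, hTb, hjm]
        have h0 : 0 ≤ j % 6 := Int.emod_nonneg j (by norm_num)
        have h6 : j % 6 < 6 := Int.emod_lt_of_pos j (by norm_num)
        set r := j % 6 with hr
        clear_value r
        interval_cases r
        · rw [Txj_0, show (0:ℤ) - 1 = -1 by norm_num, Txj_neg1, flip3]
          have h := hrel3 (x + (1, -1))
          rw [add_assoc, show (((1:ℤ), (-1:ℤ)) + ((-1:ℤ), (0:ℤ))) = ((0:ℤ), (-1:ℤ)) by decide]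
            at h
          rw [add_assoc, show (((1:ℤ), (-1:ℤ)) + ((-1:ℤ), (1:ℤ))) = (0 : ℤ × ℤ) by decide,
            add_zero] at h
          rw [← h]
          abel
        · rw [Txj_1, show (1:ℤ) - 1 = 0 by norm_num, Txj_0]
          exact hrel1 x
        · rw [Txj_2, show (2:ℤ) - 1 = 1 by norm_num, Txj_1]
          exact hrel2 x
        · rw [Txj_3, show (3:ℤ) - 1 = 2 by norm_num, Txj_2]
          exact hrel3 x
        · rw [Txj_4, show (4:ℤ) - 1 = 3 by norm_num, Txj_3, flip1]
          rw [← hrel1 (x + (-1, 0))]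
          abel
        · rw [Txj_5, show (5:ℤ) - 1 = 4 by norm_num, Txj_4, flip2]
          have h := hrel2 (x + (0, -1))
          rw [add_assoc, show (((0:ℤ), (-1:ℤ)) + ((-1:ℤ), (1:ℤ))) = ((-1:ℤ), (0:ℤ)) by decide]
            at h
          rw [← h]
          abel
      intro x j
      have hj := hjump x j
      rw [sub_eq_iff_eq_add] at hj
      show mvec (Gf σ (Txj x j)) (edgeMid x j) + c (Txj x j)
          = mvec (Gf σ (Txj x (j - 1))) (edgeMid x j) + c (Txj x (j - 1))
      rw [hj, jmpv, mvec_sub_mat]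
      abel
  · rintro ⟨ψ, G, haff, hmid, hσ⟩
    intro u hfs
    have hGf : ∀ T, Gf σ T = G T := Gf_eq σ G hσ
    have haffm : ∀ (T : Tri) (m : E2), ψ T m = mvec (Gf σ T) m + ψ T 0 := by
      intro T m
      have h := haff T m 0
      rw [sub_zero, ← hGf] at h
      rw [sub_eq_iff_eq_add] at h
      exact h
    have hjump : ∀ (x : ℤ × ℤ) (j : ℤ),
        ψ (Txj x j) 0 - ψ (Txj x (j - 1)) 0 = jmpv σ x j := by
      intro x j
      have h := hmid x j
      rw [haffm (Txj x j) (edgeMid x j), haffm (Txj x (j - 1)) (edgeMid x j)] at h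
      rw [jmpv, mvec_sub_mat, sub_eq_sub_iff_add_eq_add,
        add_comm (ψ (Txj x j) 0) (mvec (Gf σ (Txj x j)) (edgeMid x j))]
      exact h
    have hdvg : ∀ (x : ℤ × ℤ) (i : Fin 2), dvg σ x i = 0 := by
      intro x i
      have h0 := hjump x 0
      have h1 := hjump x 1
      have h2 := hjump x 2
      have h3 := hjump x 3
      have h4 := hjump x 4
      have h5 := hjump x 5
      rw [show (0:ℤ) - 1 = -1 by norm_num, Txj_neg1] at h0
      rw [show (1:ℤ) - 1 = 0 by norm_num] at h1
      rw [show (2:ℤ) - 1 = 1 by norm_num] at h2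
      rw [show (3:ℤ) - 1 = 2 by norm_num] at h3
      rw [show (4:ℤ) - 1 = 3 by norm_num] at h4
      rw [show (5:ℤ) - 1 = 4 by norm_num, Txj_5] at h5
      have hsum : jmpv σ x 0 + jmpv σ x 1 + jmpv σ x 2 + jmpv σ x 3 + jmpv σ x 4
          + jmpv σ x 5 = 0 := by
        rw [← h0, ← h1, ← h2, ← h3, ← h4, ← h5]
        abel
      have hcompn := congrArg (fun v : E2 => v i) hsum
      simp only [PiLp.add_apply] at hcompn
      have hle := loop_eq σ x i
      have hz : (0 : E2) i = 0 := rfl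
      rw [hz] at hcompn
      linarith [hle, hcompn]
    rw [key σ u hfs]
    have hzz : ∀ x : ℤ × ℤ, (∑ i, dvg σ x i * u x i) = 0 := fun x => by simp [hdvg]
    simp only [hzz]
    exact finsum_zero

end ACP
open AC in
/-- characterisation of divergence-free piecewise constant tensor fields
as rotated gradients of Crouzeix–Raviart fields (Lemma 4.5). -/
theorem divergence_free_characterisation (σ : Tri → Mat2) :
    (∀ u : ℤ × ℤ → E2, FinSupp u →
        ∑ᶠ T : Tri, Om0 / 2 * frobI (σ T) (triGrad u T) = 0) ↔
      ∃ (ψ : Tri → E2 → E2) (G : Tri → Mat2),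
        affWith ψ G ∧ midCont ψ ∧ ∀ T : Tri, σ T = G T * Jmat := by
  exact ACP.main_thm σ
end
end
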